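/- arXiv:2008.05253 — 3 statements merged into one kernel-verified Lean document; each statement's English description precedes it below -/
import Mathlib

section
/- Let N ≥ 2g+1. For every j ∈ S₀, the polynomial F(x)^{μ(μ+1)/2} divides det Σ_j(x) in Λ[x]. -/
open Polynomial

noncomputable section

/-- The index set for the 3g+2 variables pᵢ (i ≤ 2g) and qᵢ (i ≤ g). -/
abbrev HypVars (g : ℕ) := Fin (2*g+1) ⊕ Fin (g+1)

/-- Λ = ℤ[p₀,…,p_{2g},q₀,…,q_g]. -/
abbrev Lam (g : ℕ) := MvPolynomial (HypVars g) ℤ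

/-- 𝗉(x) = x^{2g+1} + p_{2g}x^{2g} + ⋯ + p₀ ∈ Λ[x]. -/
def pUniv (g : ℕ) : Polynomial (Lam g) :=
  X ^ (2*g+1) + ∑ i : Fin (2*g+1), C (MvPolynomial.X (Sum.inl i)) * X ^ (i : ℕ)

/-- 𝗊(x) = q_gx^g + ⋯ + q₀ ∈ Λ[x]. -/
def qUniv (g : ℕ) : Polynomial (Lam g) :=
  ∑ i : Fin (g+1), C (MvPolynomial.X (Sum.inr i)) * X ^ (i : ℕ)

/-- F(x) = 𝗊(x)² + 4𝗉(x). -/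
def FUniv (g : ℕ) : Polynomial (Lam g) := qUniv g ^ 2 + 4 * pUniv g

/-- μ = ⌊(N−2g−1)/2⌋. -/
def muN (g N : ℕ) : ℕ := (N - (2*g+1)) / 2

/-- ν = ⌊N/2⌋ + 1. -/
def nuN (N : ℕ) : ℕ := N / 2 + 1

/-- C_{m,n} = ∏_{r=0}^{n−1} (m − 2r). -/
def Cc (m : ℤ) (n : ℕ) : ℤ := ∏ r ∈ Finset.range n, (m - 2*(r : ℤ))

/-- `IsUnivST g s t` says that `s i n`, `t i n` (for `n ≥ 1`) are the unique polynomials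
`s_{i,n}(x), t_{i,n}(x) ∈ Λ[x]` with
`(2y + 𝗊(x))^{2n−1} · D₁ⁿ(xⁱy) = n!(s_{i,n}(x) + t_{i,n}(x)y)` in the fraction field `L` of
`Λ[x][y]/(y² + 𝗊(x)y − 𝗉(x))`, where `D₁` is the derivation with `D₁x = 1` vanishing on `Λ`.
This is phrased by quantifying over every realization of that fraction field together with
its canonical derivation. -/
def IsUnivST (g : ℕ) (s t : ℕ → ℕ → Polynomial (Lam g)) : Prop :=
  ∀ (L : Type) [Field L], ∀ (φ : Polynomial (Lam g) →+* L) (y : L) (D : L → L),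
    Function.Injective φ →
    y ^ 2 + φ (qUniv g) * y = φ (pUniv g) →
    (∀ u v : Polynomial (Lam g), φ v * y = φ u → v = 0) →
    (∀ a b : L, D (a + b) = D a + D b) →
    (∀ a b : L, D (a * b) = a * D b + D a * b) →
    D (φ X) = 1 →
    (∀ c : Lam g, D (φ (C c)) = 0) →
    ∀ i n : ℕ, 1 ≤ n →
      (2 * y + φ (qUniv g)) ^ (2 * n - 1) * D^[n] (φ X ^ i * y)
        = (n.factorial : L) * (φ (s i n) + φ (t i n) * y)

/-- σ : Λ[x] → k[x], sending pᵢ, qᵢ to the corresponding coefficients of P, Q. -/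
def sigmaPQ (g : ℕ) {k : Type} [CommRing k] (P Q : Polynomial k) :
    Polynomial (Lam g) →+* Polynomial k :=
  Polynomial.mapRingHom (MvPolynomial.eval₂Hom (Int.castRingHom k)
    (Sum.elim (fun i : Fin (2*g+1) => P.coeff i) (fun i : Fin (g+1) => Q.coeff i)))

/-- `(x₀,y₀)` is an N-division point of `(P,Q)`: there are Φ, Ψ ∈ k[x], Ψ ≠ 0,
deg Ψ ≤ μ, deg Φ ≤ ν−1, and a branch η of the curve at x₀ with constant term y₀, such that
Φ(x₀+T) + Ψ(x₀+T)η ≡ 0 mod T^N. -/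
def IsDivisionPoint (g : ℕ) {k : Type} [Field k] (P Q : Polynomial k) (N : ℕ)
    (x₀ y₀ : k) : Prop :=
  ∃ (Φ Ψ : Polynomial k) (η : PowerSeries k),
    Ψ ≠ 0 ∧ Ψ.natDegree ≤ muN g N ∧ Φ.degree ≤ ((nuN N - 1 : ℕ) : WithBot ℕ) ∧
    PowerSeries.constantCoeff η = y₀ ∧
    η ^ 2 + ((Q.comp (C x₀ + X) : Polynomial k) : PowerSeries k) * η
      = ((P.comp (C x₀ + X) : Polynomial k) : PowerSeries k) ∧
    (PowerSeries.X : PowerSeries k) ^ N ∣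
      (((Φ.comp (C x₀ + X) : Polynomial k) : PowerSeries k)
        + ((Ψ.comp (C x₀ + X) : Polynomial k) : PowerSeries k) * η)


section DerFacts
variable {L : Type} [Field L] (D : L → L)

lemma D_zero (hadd : ∀ a b, D (a + b) = D a + D b) : D 0 = 0 := by
  have h := hadd 0 0
  rw [add_zero] at h
  exact (left_eq_add.mp h)

lemma D_nsmul (hadd : ∀ a b, D (a + b) = D a + D b) (k : ℕ) (a : L) :
    D (k • a) = k • D a := by
  induction k with
  | zero => simpa using D_zero D hadd
  | succ k ih => rw [succ_nsmul, succ_nsmul, hadd, ih]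

lemma D_two_term (hadd : ∀ a b, D (a + b) = D a + D b)
    (hmul : ∀ a b, D (a * b) = a * D b + D a * b)
    (c : L) (hc : D c = 1) :
    ∀ (n : ℕ) (u : L), D^[n+1] (c * u) = c * D^[n+1] u + (n+1) • D^[n] u := by
  intro n
  induction n with
  | zero =>
    intro u
    simpa [hc] using hmul c u
  | succ n ih =>
    intro u
    rw [Function.iterate_succ_apply' D (n+1) (c*u), ih u, hadd, hmul, hc,
      D_nsmul D hadd, ← Function.iterate_succ_apply' D (n+1) u,
      ← Function.iterate_succ_apply' D n u]
    simp only [nsmul_eq_mul]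
    push_cast
    ring

end DerFacts

set_option synthInstance.maxHeartbeats 1000000
set_option maxHeartbeats 4000000
namespace Stmt8Aux
variable (g : ℕ)

def fg : Polynomial (Polynomial (Lam g)) := X^2 + C (qUniv g) * X - C (pUniv g)

lemma natDegree_qUniv_le : (qUniv g).natDegree ≤ g := by
  unfold qUniv
  refine natDegree_sum_le_of_forall_le _ _ fun i _ => ?_
  calc (C (MvPolynomial.X (Sum.inr i)) * X ^ (i:ℕ)).natDegree
      ≤ (C (MvPolynomial.X (Sum.inr i)) : Polynomial (Lam g)).natDegree + (X ^ (i:ℕ) : Polynomial (Lam g)).natDegree := natDegree_mul_le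
    _ ≤ g := by simp [natDegree_X_pow]; exact Fin.is_le i

lemma natDegree_pUniv_le : (pUniv g).natDegree ≤ 2*g+1 := by
  unfold pUniv
  refine (natDegree_add_le _ _).trans (max_le (by simp) ?_)
  refine natDegree_sum_le_of_forall_le _ _ fun i _ => ?_
  calc (C (MvPolynomial.X (Sum.inl i)) * X ^ (i:ℕ)).natDegree
      ≤ (C (MvPolynomial.X (Sum.inl i)) : Polynomial (Lam g)).natDegree + (X ^ (i:ℕ) : Polynomial (Lam g)).natDegree := natDegree_mul_le
    _ ≤ 2*g+1 := by simp only [natDegree_C, natDegree_X_pow, zero_add]; have := i.isLt; omega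

lemma coeff_pUniv_top : (pUniv g).coeff (2*g+1) = 1 := by
  unfold pUniv
  rw [coeff_add, coeff_X_pow, if_pos rfl, finset_sum_coeff, Finset.sum_eq_zero, add_zero]
  intro i _
  rw [coeff_C_mul, coeff_X_pow, if_neg (by have := i.isLt; omega), mul_zero]

lemma coeff_FUniv_top : (FUniv g).coeff (2*g+1) = 4 := by
  unfold FUniv
  rw [coeff_add]
  have h1 : (qUniv g ^ 2).coeff (2*g+1) = 0 := by
    apply coeff_eq_zero_of_natDegree_lt
    calc (qUniv g ^ 2).natDegree ≤ 2 * (qUniv g).natDegree := natDegree_pow_le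
      _ ≤ 2 * g := by have := natDegree_qUniv_le g; omega
      _ < 2*g+1 := by omega
  have h2 : ((4 : Polynomial (Lam g)) * pUniv g).coeff (2*g+1) = 4 := by
    have : (4 : Polynomial (Lam g)) = C (4 : Lam g) := (map_ofNat C 4).symm
    rw [this, coeff_C_mul, coeff_pUniv_top, mul_one]
  rw [h1, h2, zero_add]

lemma natDegree_FUniv : (FUniv g).natDegree = 2*g+1 := by
  refine le_antisymm ?_ (le_natDegree_of_ne_zero ?_)
  · unfold FUniv
    refine (natDegree_add_le _ _).trans (max_le ?_ ?_)
    · calc (qUniv g ^ 2).natDegree ≤ 2 * (qUniv g).natDegree := natDegree_pow_le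
        _ ≤ 2*g+1 := by have := natDegree_qUniv_le g; omega
    · calc ((4:Polynomial (Lam g)) * pUniv g).natDegree ≤ (4:Polynomial (Lam g)).natDegree + (pUniv g).natDegree := natDegree_mul_le
        _ ≤ 2*g+1 := by simpa using natDegree_pUniv_le g
  · rw [coeff_FUniv_top]; norm_num

lemma FUniv_ne_zero : FUniv g ≠ 0 := by
  intro h
  have := coeff_FUniv_top g
  rw [h, coeff_zero] at this
  exact absurd this.symm (by norm_num)


abbrev Kg := FractionRing (Polynomial (Lam g))

lemma not_isSquare_FUniv (e : Kg g) : e^2 ≠ algebraMap (Polynomial (Lam g)) (Kg g) (FUniv g) := by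
  intro he
  obtain ⟨a, b, hb, rfl⟩ := IsFractionRing.div_surjective (A := Polynomial (Lam g)) e
  have hb0 : b ≠ 0 := nonZeroDivisors.ne_zero hb
  set ℓ := algebraMap (Polynomial (Lam g)) (Kg g)
  have hlb : ℓ b ≠ 0 := by
    simpa using fun h => hb0 (IsFractionRing.injective (Polynomial (Lam g)) (Kg g) (h.trans (map_zero ℓ).symm))
  have he' : ℓ (a^2) = ℓ (FUniv g * b^2) := by
    rw [map_pow, map_mul, map_pow]
    field_simp at he
    linear_combination he
  have key : a^2 = FUniv g * b^2 := IsFractionRing.injective (Polynomial (Lam g)) (Kg g) he'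
  have ha0 : a ≠ 0 := by
    intro h
    rw [h, zero_pow two_ne_zero] at key
    rcases mul_eq_zero.mp key.symm with h' | h'
    · exact FUniv_ne_zero g h'
    · exact hb0 (pow_eq_zero_iff (by norm_num) |>.mp h')
  have hdeg := congrArg natDegree key
  rw [natDegree_pow, natDegree_mul (FUniv_ne_zero g) (pow_ne_zero _ hb0), natDegree_pow,
    natDegree_FUniv] at hdeg
  omega

lemma fg_eq : fg g = X^2 + (C (qUniv g) * X - C (pUniv g)) := by rw [fg]; ring

lemma degree_low : (C (qUniv g) * X - C (pUniv g)).degree ≤ 1 := by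
  refine (degree_sub_le _ _).trans (max_le ?_ ?_)
  · refine (degree_mul_le _ _).trans ?_
    simpa using add_le_add degree_C_le (le_refl (degree (X : Polynomial (Polynomial (Lam g)))))
  · exact degree_C_le.trans (by norm_num)

lemma monic_fg : (fg g).Monic := by
  rw [fg_eq]
  exact monic_X_pow_add (lt_of_le_of_lt (degree_low g) (by norm_num))

lemma degree_fg : (fg g).degree = 2 := by
  rw [fg_eq]
  rw [degree_add_eq_left_of_degree_lt]
  · exact degree_X_pow 2
  · rw [degree_X_pow]
    exact lt_of_le_of_lt (degree_low g) (by norm_num)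

lemma natDegree_fg : (fg g).natDegree = 2 := natDegree_eq_of_degree_eq_some (degree_fg g)

set_option synthInstance.maxHeartbeats 1000000 in
set_option maxHeartbeats 1000000 in
lemma irreducible_fg : Irreducible (fg g) := by
  rw [(monic_fg g).irreducible_iff_irreducible_map_fraction_map (K := Kg g)]
  set ℓ := algebraMap (Polynomial (Lam g)) (Kg g)
  set fK := Polynomial.map ℓ (fg g) with hfK
  by_contra hred
  have hm : fK.Monic := (monic_fg g).map ℓ
  have hnd : fK.natDegree = 2 := by
    rw [hfK, (monic_fg g).natDegree_map]; exact natDegree_fg g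
  obtain ⟨c₁, c₂, hc0, hc1⟩ := (hm.not_irreducible_iff_exists_add_mul_eq_coeff hnd).mp hred
  have hco0 : fK.coeff 0 = - ℓ (pUniv g) := by
    rw [hfK, coeff_map]
    simp [fg, coeff_X, coeff_one]
  have hco1 : fK.coeff 1 = ℓ (qUniv g) := by
    rw [hfK, coeff_map]
    simp [fg, coeff_X, coeff_one]
  rw [hco0] at hc0
  rw [hco1] at hc1
  apply not_isSquare_FUniv g (ℓ (qUniv g) - 2*c₁)
  have hF : ℓ (FUniv g) = ℓ (qUniv g)^2 + 4 * ℓ (pUniv g) := by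
    rw [FUniv, map_add, map_pow, map_mul, map_ofNat]
  rw [hF]
  linear_combination (4:Kg g) * hc0 + (-4*c₁) * hc1

set_option synthInstance.maxHeartbeats 1000000 in
lemma prime_fg : Prime (fg g) :=
  by
  letI i1 : UniqueFactorizationMonoid ((Lam g)[X][X]) := inferInstance
  exact (@UniqueFactorizationMonoid.irreducible_iff_prime ((Lam g)[X][X]) _ i1 (fg g)).mp (irreducible_fg g)


/-- derivative on Λ[x] as a ℤ-derivation -/
def d0 : Derivation ℤ (Polynomial (Lam g)) (Polynomial (Lam g)) :=
  Derivation.mk'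
    { toFun := derivative
      map_add' := fun a b => derivative_add
      map_smul' := fun z a => derivative_smul z a }
    (fun a b => by simp only [LinearMap.coe_mk, AddHom.coe_mk, smul_eq_mul]; rw [derivative_mul]; ring)

@[simp] lemma d0_apply (a : Polynomial (Lam g)) : d0 g a = derivative a := rfl

/-- coefficientwise x-derivative on Λ[x][Y] -/
def dxF : Polynomial (Polynomial (Lam g)) → Polynomial (Polynomial (Lam g)) :=
  fun u => PolynomialModule.equivPolynomialSelf ((d0 g).mapCoeffs u)

lemma dxF_add (u v) : dxF g (u+v) = dxF g u + dxF g v := by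
  unfold dxF; rw [map_add, map_add]

lemma dxF_sub (u v) : dxF g (u-v) = dxF g u - dxF g v := by
  unfold dxF; rw [map_sub, map_sub]

lemma dxF_mul (u v) : dxF g (u*v) = u * dxF g v + v * dxF g u := by
  unfold dxF
  rw [Derivation.leibniz, map_add, map_smul, map_smul, smul_eq_mul, smul_eq_mul]

lemma dxF_monomial (n : ℕ) (a : Polynomial (Lam g)) :
    dxF g (monomial n a) = monomial n (derivative a) := by
  unfold dxF
  rw [Derivation.mapCoeffs_monomial]
  rw [PolynomialModule.equivPolynomialSelf_apply_eq, PolynomialModule.equivPolynomial_single]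
  simp

lemma dxF_C (a : Polynomial (Lam g)) : dxF g (C a) = C (derivative a) := by
  rw [← monomial_zero_left, dxF_monomial, monomial_zero_left]

lemma dxF_one : dxF g 1 = 0 := by
  have := dxF_C g 1
  simpa using this

lemma dxF_X_pow (n : ℕ) : dxF g (X^n) = 0 := by
  rw [← one_mul (X^n : Polynomial (Polynomial (Lam g))), ← C_1, C_mul_X_pow_eq_monomial, dxF_monomial]
  simp

/-- the multiplier for d/dY -/
def wg : Polynomial (Polynomial (Lam g)) :=
  (2*X + C (qUniv g)) * (C (derivative (pUniv g)) - C (derivative (qUniv g)) * X)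

/-- delta = F * D on Λ[x][Y] -/
def deltaP : Polynomial (Polynomial (Lam g)) → Polynomial (Polynomial (Lam g)) :=
  fun u => C (FUniv g) * dxF g u + wg g * derivative u

lemma deltaP_add (u v) : deltaP g (u+v) = deltaP g u + deltaP g v := by
  unfold deltaP; rw [dxF_add, derivative_add]; ring

lemma deltaP_sub (u v) : deltaP g (u-v) = deltaP g u - deltaP g v := by
  unfold deltaP; rw [dxF_sub, derivative_sub]; ring

lemma deltaP_mul (u v) : deltaP g (u*v) = u * deltaP g v + v * deltaP g u := by
  unfold deltaP; rw [dxF_mul, derivative_mul]; ring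

lemma deltaP_C (a : Polynomial (Lam g)) : deltaP g (C a) = C (FUniv g * derivative a) := by
  unfold deltaP; rw [dxF_C, derivative_C, map_mul]; ring

lemma dxF_fg : dxF g (fg g) = C (derivative (qUniv g)) * X - C (derivative (pUniv g)) := by
  unfold fg
  rw [dxF_sub, dxF_add, dxF_X_pow, dxF_C]
  rw [show (C (qUniv g) * X : Polynomial (Polynomial (Lam g))) = monomial 1 (qUniv g) by
    rw [← C_mul_X_pow_eq_monomial, pow_one]]
  rw [dxF_monomial]
  rw [← C_mul_X_pow_eq_monomial, pow_one]
  ring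

lemma derivative_fg : derivative (fg g) = 2*X + C (qUniv g) := by
  unfold fg
  simp [map_ofNat]
  rw [one_add_one_eq_two]

lemma deltaP_fg : deltaP g (fg g) =
    ((C (derivative (qUniv g)) * X - C (derivative (pUniv g))) * (-4)) * fg g := by
  unfold deltaP
  rw [dxF_fg, derivative_fg]
  unfold wg fg FUniv
  simp only [map_add, map_mul, map_pow, map_ofNat]
  ring

lemma deltaP_dvd {u : Polynomial (Polynomial (Lam g))} (h : fg g ∣ u) : fg g ∣ deltaP g u := by
  obtain ⟨v, rfl⟩ := h
  rw [deltaP_mul, deltaP_fg]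
  exact ⟨deltaP g v + v * ((C (derivative (qUniv g)) * X - C (derivative (pUniv g))) * (-4)), by ring⟩


abbrev Ag := AdjoinRoot (fg g)

instance : IsDomain (Ag g) := AdjoinRoot.isDomain_of_prime (prime_fg g)

/-- delta on A = Λ[x][Y]/(f) -/
def deltaA : Ag g → Ag g :=
  fun a => AdjoinRoot.mk (fg g) (deltaP g (AdjoinRoot.mk_surjective a).choose)

lemma deltaA_mk (u : Polynomial (Polynomial (Lam g))) :
    deltaA g (AdjoinRoot.mk (fg g) u) = AdjoinRoot.mk (fg g) (deltaP g u) := by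
  unfold deltaA
  have h : AdjoinRoot.mk (fg g) ((AdjoinRoot.mk_surjective (AdjoinRoot.mk (fg g) u)).choose)
      = AdjoinRoot.mk (fg g) u := (AdjoinRoot.mk_surjective _).choose_spec
  rw [AdjoinRoot.mk_eq_mk] at h ⊢
  have h2 := deltaP_dvd g h
  rwa [deltaP_sub] at h2

lemma deltaA_add (a b : Ag g) : deltaA g (a+b) = deltaA g a + deltaA g b := by
  obtain ⟨u, rfl⟩ := AdjoinRoot.mk_surjective a
  obtain ⟨v, rfl⟩ := AdjoinRoot.mk_surjective b
  rw [← map_add, deltaA_mk, deltaA_mk, deltaA_mk, deltaP_add, map_add]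

lemma deltaA_mul (a b : Ag g) : deltaA g (a*b) = a * deltaA g b + b * deltaA g a := by
  obtain ⟨u, rfl⟩ := AdjoinRoot.mk_surjective a
  obtain ⟨v, rfl⟩ := AdjoinRoot.mk_surjective b
  rw [← map_mul, deltaA_mk, deltaA_mk, deltaA_mk, deltaP_mul, map_add, map_mul, map_mul]

lemma deltaA_of (r : Polynomial (Lam g)) :
    deltaA g (AdjoinRoot.of (fg g) r) = AdjoinRoot.of (fg g) (FUniv g * derivative r) := by
  have h : AdjoinRoot.of (fg g) r = AdjoinRoot.mk (fg g) (C r) := rfl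
  rw [h, deltaA_mk, deltaP_C]
  rfl

lemma deltaA_one : deltaA g 1 = 0 := by
  have h := deltaA_mk g 1
  rw [map_one] at h
  rw [h]
  unfold deltaP
  rw [dxF_one, derivative_one]
  simp

abbrev Lg := FractionRing (Ag g)

lemma ellA_inj : Function.Injective (algebraMap (Ag g) (Lg g)) :=
  IsFractionRing.injective _ _

lemma ellA_ne_zero {a : Ag g} (ha : a ≠ 0) : algebraMap (Ag g) (Lg g) a ≠ 0 :=
  fun h => ha (ellA_inj g (h.trans (map_zero _).symm))

/-- quotient-rule extension of deltaA to the fraction field -/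
def Dhat : Lg g → Lg g := fun x =>
  (algebraMap (Ag g) (Lg g) (deltaA g (IsLocalization.sec (nonZeroDivisors (Ag g)) x).1)
      * algebraMap (Ag g) (Lg g) ((IsLocalization.sec (nonZeroDivisors (Ag g)) x).2 : Ag g)
    - algebraMap (Ag g) (Lg g) (IsLocalization.sec (nonZeroDivisors (Ag g)) x).1
      * algebraMap (Ag g) (Lg g) (deltaA g ((IsLocalization.sec (nonZeroDivisors (Ag g)) x).2 : Ag g)))
    / (algebraMap (Ag g) (Lg g) ((IsLocalization.sec (nonZeroDivisors (Ag g)) x).2 : Ag g))^2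

lemma Dhat_spec (x : Lg g) (a s : Ag g) (hs : s ≠ 0)
    (h : x * algebraMap (Ag g) (Lg g) s = algebraMap (Ag g) (Lg g) a) :
    Dhat g x = (algebraMap (Ag g) (Lg g) (deltaA g a) * algebraMap (Ag g) (Lg g) s
      - algebraMap (Ag g) (Lg g) a * algebraMap (Ag g) (Lg g) (deltaA g s))
      / (algebraMap (Ag g) (Lg g) s)^2 := by
  set ℓ := algebraMap (Ag g) (Lg g) with hℓdef
  set a₀ := (IsLocalization.sec (nonZeroDivisors (Ag g)) x).1 with ha₀
  set s₀ := ((IsLocalization.sec (nonZeroDivisors (Ag g)) x).2 : Ag g) with hs₀def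
  have h₀ : x * ℓ s₀ = ℓ a₀ := IsLocalization.sec_spec _ x
  have hs₀ : s₀ ≠ 0 :=
    nonZeroDivisors.ne_zero (IsLocalization.sec (nonZeroDivisors (Ag g)) x).2.2
  have hls : ℓ s ≠ 0 := ellA_ne_zero g hs
  have hls₀ : ℓ s₀ ≠ 0 := ellA_ne_zero g hs₀
  have hE : a * s₀ = a₀ * s := by
    apply ellA_inj g
    rw [map_mul, map_mul, ← h, ← h₀]
    ring
  have hE' : a * deltaA g s₀ + s₀ * deltaA g a = a₀ * deltaA g s + s * deltaA g a₀ := by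
    have h2 := congrArg (deltaA g) hE
    rwa [deltaA_mul, deltaA_mul] at h2
  have key : (deltaA g a₀ * s₀ - a₀ * deltaA g s₀) * s^2
      = (deltaA g a * s - a * deltaA g s) * s₀^2 := by
    linear_combination (-(s*s₀)) * hE' + (deltaA g s₀ * s + deltaA g s * s₀) * hE
  show (ℓ (deltaA g a₀) * ℓ s₀ - ℓ a₀ * ℓ (deltaA g s₀)) / (ℓ s₀)^2 = _
  rw [div_eq_div_iff (pow_ne_zero 2 hls₀) (pow_ne_zero 2 hls)]
  calc (ℓ (deltaA g a₀) * ℓ s₀ - ℓ a₀ * ℓ (deltaA g s₀)) * (ℓ s)^2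
      = ℓ ((deltaA g a₀ * s₀ - a₀ * deltaA g s₀) * s^2) := by
        rw [map_mul, map_sub, map_mul, map_mul, map_pow]
    _ = ℓ ((deltaA g a * s - a * deltaA g s) * s₀^2) := congrArg ℓ key
    _ = (ℓ (deltaA g a) * ℓ s - ℓ a * ℓ (deltaA g s)) * (ℓ s₀)^2 := by
        rw [map_mul, map_sub, map_mul, map_mul, map_pow]

lemma exists_rep (x : Lg g) : ∃ a s : Ag g, s ≠ 0
    ∧ x * algebraMap (Ag g) (Lg g) s = algebraMap (Ag g) (Lg g) a :=
  ⟨(IsLocalization.sec (nonZeroDivisors (Ag g)) x).1,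
   ((IsLocalization.sec (nonZeroDivisors (Ag g)) x).2 : Ag g),
   nonZeroDivisors.ne_zero (IsLocalization.sec (nonZeroDivisors (Ag g)) x).2.2,
   IsLocalization.sec_spec _ x⟩

lemma Dhat_algebraMap (a : Ag g) :
    Dhat g (algebraMap (Ag g) (Lg g) a) = algebraMap (Ag g) (Lg g) (deltaA g a) := by
  have h1 : algebraMap (Ag g) (Lg g) a * algebraMap (Ag g) (Lg g) (1 : Ag g)
      = algebraMap (Ag g) (Lg g) a := by rw [map_one, mul_one]
  rw [Dhat_spec g _ a 1 one_ne_zero h1, deltaA_one]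
  simp

lemma Dhat_add (x y : Lg g) : Dhat g (x+y) = Dhat g x + Dhat g y := by
  obtain ⟨a, s, hs, hx⟩ := exists_rep g x
  obtain ⟨b, t, ht, hy⟩ := exists_rep g y
  set ℓ := algebraMap (Ag g) (Lg g) with hℓdef
  have hls : ℓ s ≠ 0 := ellA_ne_zero g hs
  have hlt : ℓ t ≠ 0 := ellA_ne_zero g ht
  have hst : s * t ≠ 0 := mul_ne_zero hs ht
  have hxy : (x+y) * ℓ (s*t) = ℓ (a*t + b*s) := by
    rw [map_mul, map_add, map_mul, map_mul]
    linear_combination ℓ t * hx + ℓ s * hy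
  rw [Dhat_spec g _ _ _ hst hxy, Dhat_spec g _ _ _ hs hx, Dhat_spec g _ _ _ ht hy]
  rw [deltaA_add, deltaA_mul, deltaA_mul, deltaA_mul]
  simp only [map_add, map_mul, ← hℓdef]
  field_simp
  ring

lemma Dhat_mul (x y : Lg g) : Dhat g (x*y) = x * Dhat g y + y * Dhat g x := by
  obtain ⟨a, s, hs, hx⟩ := exists_rep g x
  obtain ⟨b, t, ht, hy⟩ := exists_rep g y
  set ℓ := algebraMap (Ag g) (Lg g) with hℓdef
  have hls : ℓ s ≠ 0 := ellA_ne_zero g hs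
  have hlt : ℓ t ≠ 0 := ellA_ne_zero g ht
  have hst : s * t ≠ 0 := mul_ne_zero hs ht
  have hxy : (x*y) * ℓ (s*t) = ℓ (a*b) := by
    rw [map_mul, map_mul]
    linear_combination (y * ℓ t) * hx + ℓ a * hy
  have hx' : x = ℓ a / ℓ s := by rw [eq_div_iff hls]; exact hx
  have hy' : y = ℓ b / ℓ t := by rw [eq_div_iff hlt]; exact hy
  rw [Dhat_spec g _ _ _ hst hxy, Dhat_spec g _ _ _ hs hx, Dhat_spec g _ _ _ ht hy,
    deltaA_mul, deltaA_mul, hx', hy']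
  simp only [map_add, map_mul, ← hℓdef]
  field_simp
  ring

/-- the derivation D₁ on L -/
def Dfun : Lg g → Lg g := fun x =>
  (algebraMap (Ag g) (Lg g) (AdjoinRoot.of (fg g) (FUniv g)))⁻¹ * Dhat g x

/-- the embedding Λ[x] → L -/
def phiL : Polynomial (Lam g) →+* Lg g :=
  (algebraMap (Ag g) (Lg g)).comp (AdjoinRoot.of (fg g))

lemma phiL_inj : Function.Injective (phiL g) := by
  have hdeg : (fg g).degree ≠ 0 := by rw [degree_fg g]; decide
  intro a b hab
  have h1 : algebraMap (Ag g) (Lg g) (AdjoinRoot.of (fg g) a)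
      = algebraMap (Ag g) (Lg g) (AdjoinRoot.of (fg g) b) := hab
  exact AdjoinRoot.of.injective_of_degree_ne_zero hdeg (ellA_inj g h1)

lemma phiF_ne : phiL g (FUniv g) ≠ 0 :=
  fun h => FUniv_ne_zero g (phiL_inj g (h.trans (map_zero _).symm))

lemma Dfun_phi (u : Polynomial (Lam g)) : Dfun g (phiL g u) = phiL g (derivative u) := by
  calc Dfun g (phiL g u)
      = (phiL g (FUniv g))⁻¹
        * Dhat g (algebraMap (Ag g) (Lg g) (AdjoinRoot.of (fg g) u)) := rfl
    _ = (phiL g (FUniv g))⁻¹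
        * algebraMap (Ag g) (Lg g) (deltaA g (AdjoinRoot.of (fg g) u)) := by
          rw [Dhat_algebraMap]
    _ = (phiL g (FUniv g))⁻¹ * (phiL g (FUniv g) * phiL g (derivative u)) := by
          rw [deltaA_of]
          have h : algebraMap (Ag g) (Lg g) (AdjoinRoot.of (fg g) (FUniv g * derivative u))
              = phiL g (FUniv g * derivative u) := rfl
          rw [h, map_mul]
    _ = phiL g (derivative u) := inv_mul_cancel_left₀ (phiF_ne g) _

lemma Dfun_add (x y : Lg g) : Dfun g (x+y) = Dfun g x + Dfun g y := by
  unfold Dfun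
  rw [Dhat_add, mul_add]

lemma Dfun_mul (x y : Lg g) : Dfun g (x*y) = x * Dfun g y + Dfun g x * y := by
  unfold Dfun
  rw [Dhat_mul]
  ring

def yg : Lg g := algebraMap (Ag g) (Lg g) (AdjoinRoot.root (fg g))

lemma y_rel : yg g ^ 2 + phiL g (qUniv g) * yg g = phiL g (pUniv g) := by
  have hA : (AdjoinRoot.root (fg g))^2 + AdjoinRoot.of (fg g) (qUniv g) * AdjoinRoot.root (fg g)
      - AdjoinRoot.of (fg g) (pUniv g) = 0 := by
    have h : AdjoinRoot.mk (fg g) (X^2 + C (qUniv g) * X - C (pUniv g)) = 0 := AdjoinRoot.mk_self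
    simpa [map_sub, map_add, map_mul, map_pow, AdjoinRoot.mk_X, AdjoinRoot.mk_C] using h
  have h2 := congrArg (algebraMap (Ag g) (Lg g)) hA
  simp only [map_sub, map_add, map_mul, map_pow, map_zero] at h2
  have hq : phiL g (qUniv g) = algebraMap (Ag g) (Lg g) (AdjoinRoot.of (fg g) (qUniv g)) := rfl
  have hp : phiL g (pUniv g) = algebraMap (Ag g) (Lg g) (AdjoinRoot.of (fg g) (pUniv g)) := rfl
  rw [hq, hp]
  unfold yg
  linear_combination h2

lemma indep (u v : Polynomial (Lam g)) (h : phiL g v * yg g = phiL g u) : v = 0 := by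
  have h' : AdjoinRoot.of (fg g) v * AdjoinRoot.root (fg g) = AdjoinRoot.of (fg g) u := by
    apply ellA_inj g
    rw [map_mul]
    exact h
  have h2 : AdjoinRoot.mk (fg g) (C v * X - C u) = 0 := by
    rw [map_sub, map_mul, AdjoinRoot.mk_C, AdjoinRoot.mk_X, AdjoinRoot.mk_C]
    show AdjoinRoot.of (fg g) v * AdjoinRoot.root (fg g) - AdjoinRoot.of (fg g) u = 0
    rw [h', sub_self]
  rw [AdjoinRoot.mk_eq_zero] at h2
  by_contra hv
  have hne : (C v * X - C u : Polynomial (Polynomial (Lam g))) ≠ 0 := by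
    intro h0
    have h1 := congrArg (fun p => coeff p 1) h0
    simp only [coeff_sub, coeff_C_mul, coeff_X_one, mul_one, coeff_C, coeff_zero] at h1
    simp at h1
    exact hv h1
  have hd := natDegree_le_of_dvd h2 hne
  rw [natDegree_fg] at hd
  have hle : (C v * X - C u : Polynomial (Polynomial (Lam g))).natDegree ≤ 1 := by
    refine (natDegree_sub_le _ _).trans (max_le ?_ ?_)
    · exact (natDegree_mul_le).trans (by simp)
    · simp
  omega

lemma hw2L : (2 * yg g + phiL g (qUniv g))^2 = phiL g (FUniv g) := by
  have hF : phiL g (FUniv g) = phiL g (qUniv g)^2 + 4 * phiL g (pUniv g) := by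
    rw [FUniv, map_add, map_pow, map_mul, map_ofNat]
  rw [hF]
  linear_combination (4 : Lg g) * y_rel g

lemma rec_s (s t : ℕ → ℕ → Polynomial (Lam g)) (hst : IsUnivST g s t) (i m : ℕ) :
    s (i+1) (m+2) = X * s i (m+2) + FUniv g * s i (m+1) := by
  have hDX : Dfun g (phiL g X) = 1 := by rw [Dfun_phi, derivative_X, map_one]
  have hDC : ∀ c : Lam g, Dfun g (phiL g (C c)) = 0 := fun c => by
    rw [Dfun_phi, derivative_C, map_zero]
  have hb := hst (Lg g) (phiL g) (yg g) (Dfun g) (phiL_inj g) (y_rel g) (indep g)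
    (Dfun_add g) (Dfun_mul g) hDX hDC
  have h1 := hb (i+1) (m+2) (by omega)
  have h2 := hb i (m+2) (by omega)
  have h3 := hb i (m+1) (by omega)
  rw [show 2*(m+2)-1 = 2*m+3 from by omega] at h1 h2
  rw [show 2*(m+1)-1 = 2*m+1 from by omega] at h3
  have hXiy : phiL g X ^ (i+1) * yg g = phiL g X * (phiL g X ^ i * yg g) := by ring
  have hL : (Dfun g)^[m+2] (phiL g X * (phiL g X ^ i * yg g))
      = phiL g X * (Dfun g)^[m+2] (phiL g X ^ i * yg g)
        + (m+2) • (Dfun g)^[m+1] (phiL g X ^ i * yg g) :=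
    D_two_term (Dfun g) (Dfun_add g) (Dfun_mul g) (phiL g X) hDX (m+1)
      (phiL g X ^ i * yg g)
  rw [hXiy, hL] at h1
  set w := 2 * yg g + phiL g (qUniv g) with hw
  set P2 := (Dfun g)^[m+2] (phiL g X ^ i * yg g) with hP2
  set P1 := (Dfun g)^[m+1] (phiL g X ^ i * yg g) with hP1
  have hww : w^2 = phiL g (FUniv g) := hw2L g
  have hsplit2 : w^(2*m+3) = phiL g (FUniv g) * w^(2*m+1) := by
    rw [show 2*m+3 = 2+(2*m+1) from by omega, pow_add, hww]
  have hcalc : ((m+2).factorial : Lg g)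
        * (phiL g (s (i+1) (m+2)) + phiL g (t (i+1) (m+2)) * yg g)
      = phiL g X * (((m+2).factorial : Lg g)
          * (phiL g (s i (m+2)) + phiL g (t i (m+2)) * yg g))
        + ((m+2 : ℕ) : Lg g) * (phiL g (FUniv g) * (((m+1).factorial : Lg g)
          * (phiL g (s i (m+1)) + phiL g (t i (m+1)) * yg g))) := by
    rw [← h1, ← h2, ← h3, hsplit2]
    simp only [nsmul_eq_mul]
    push_cast
    ring
  have hfact : ((m+2 : ℕ) : Lg g) * ((m+1).factorial : Lg g) = ((m+2).factorial : Lg g) := by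
    exact_mod_cast congrArg (Nat.cast (R := Lg g)) (Nat.factorial_succ (m+1)).symm
  have hUV : phiL g (((m+2).factorial : Polynomial (Lam g))
        * (X * t i (m+2) + FUniv g * t i (m+1) - t (i+1) (m+2))) * yg g
      = phiL g (((m+2).factorial : Polynomial (Lam g))
        * (s (i+1) (m+2) - X * s i (m+2) - FUniv g * s i (m+1))) := by
    simp only [map_mul, map_sub, map_add, map_natCast]
    linear_combination (-1 : Lg g) * hcalc
      - (phiL g (FUniv g) * (phiL g (s i (m+1)) + phiL g (t i (m+1)) * yg g)) * hfact
  have hV := indep g _ _ hUV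
  have hU : ((m+2).factorial : Polynomial (Lam g))
      * (s (i+1) (m+2) - X * s i (m+2) - FUniv g * s i (m+1)) = 0 := by
    apply phiL_inj g
    rw [map_zero, ← hUV, hV, map_zero, zero_mul]
  have hfne : ((m+2).factorial : Polynomial (Lam g)) ≠ 0 :=
    Nat.cast_ne_zero.mpr (Nat.factorial_ne_zero _)
  have hz := (mul_eq_zero.mp hU).resolve_left hfne
  linear_combination hz

lemma s_closed (s t : ℕ → ℕ → Polynomial (Lam g)) (hst : IsUnivST g s t) :
    ∀ i n : ℕ, i < n →
      s i n = ∑ k ∈ Finset.range (i+1),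
        (i.choose k) • ((X : Polynomial (Lam g))^(i-k) * FUniv g^k * s 0 (n-k)) := by
  intro i
  induction i with
  | zero => intro n _; simp
  | succ i ih =>
    intro n hn
    obtain ⟨m, rfl⟩ : ∃ m, n = m+2 := ⟨n-2, by omega⟩
    rw [rec_s g s t hst i m, ih (m+2) (by omega), ih (m+1) (by omega),
      Finset.mul_sum, Finset.mul_sum]
    have e1 : ∀ k ∈ Finset.range (i+1),
        X * ((i.choose k) • ((X : Polynomial (Lam g))^(i-k) * FUniv g^k * s 0 (m+2-k)))
        = (i.choose k) • ((X : Polynomial (Lam g))^(i+1-k) * FUniv g^k * s 0 (m+2-k)) := by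
      intro k hk
      rw [Finset.mem_range] at hk
      rw [mul_smul_comm, show i+1-k = (i-k)+1 from by omega, pow_succ]
      ring_nf
    have e2 : ∀ k ∈ Finset.range (i+1),
        FUniv g * ((i.choose k) • ((X : Polynomial (Lam g))^(i-k) * FUniv g^k * s 0 (m+1-k)))
        = (i.choose k) • ((X : Polynomial (Lam g))^(i+1-(k+1)) * FUniv g^(k+1) * s 0 (m+2-(k+1))) := by
      intro k hk
      rw [Finset.mem_range] at hk
      rw [mul_smul_comm, show i+1-(k+1) = i-k from by omega,
        show m+2-(k+1) = m+1-k from by omega, pow_succ]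
      ring_nf
    rw [Finset.sum_congr rfl e1, Finset.sum_congr rfl e2]
    set h : ℕ → Polynomial (Lam g) :=
      fun k => (X : Polynomial (Lam g))^(i+1-k) * FUniv g^k * s 0 (m+2-k) with hh
    have hrw : ∀ k, (X : Polynomial (Lam g))^(i+1-k) * FUniv g^k * s 0 (m+2-k) = h k :=
      fun k => rfl
    rw [Finset.sum_range_succ' (fun k => ((i+1).choose k) • h k) (i+1)]
    simp only [Nat.choose_succ_succ, add_smul, Finset.sum_add_distrib,
      Nat.choose_zero_right, one_smul]
    have hB : (∑ k ∈ Finset.range (i+1), (i.choose (k+1)) • h (k+1)) + h 0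
        = ∑ k ∈ Finset.range (i+1), (i.choose k) • h k := by
      have := Finset.sum_range_succ' (fun k => (i.choose k) • h k) (i+1)
      rw [Nat.choose_zero_right, one_smul] at this
      rw [← this, Finset.sum_range_succ, Nat.choose_succ_self, zero_smul, add_zero]
    rw [← hB]
    abel


end Stmt8Aux


/-- for every j ∈ S₀, F(x)^{μ(μ+1)/2} divides det Σ_j(x) in Λ[x]. -/
theorem stmt8 (g : ℕ) (hg : 1 ≤ g) (s t : ℕ → ℕ → Polynomial (Lam g))
    (hst : IsUnivST g s t) (N : ℕ) (hN : 2*g+1 ≤ N)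
    (j : Fin (muN g N + 1) → ℕ) (hmono : StrictMono j)
    (hlow : nuN N ≤ j 0) (hhigh : j (Fin.last (muN g N)) ≤ N - 1) :
    FUniv g ^ (muN g N * (muN g N + 1) / 2) ∣
      (Matrix.of fun a l : Fin (muN g N + 1) => s (a : ℕ) (j l)).det := by
  classical
  have hjl : ∀ l a : Fin (muN g N + 1), (a:ℕ) < j l := by
    intro l a
    have h1 : j 0 ≤ j l := hmono.monotone (Fin.zero_le l)
    have h2 : (a:ℕ) ≤ muN g N := Fin.is_le a
    have h3 : muN g N < nuN N := by unfold muN nuN; omega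
    have h4 := hlow
    omega
  set Am : Matrix (Fin (muN g N + 1)) (Fin (muN g N + 1)) (Polynomial (Lam g)) :=
    Matrix.of (fun a k : Fin (muN g N + 1) =>
      ((a:ℕ).choose (k:ℕ)) • ((X : Polynomial (Lam g))^((a:ℕ)-(k:ℕ)) * FUniv g^(k:ℕ)))
    with hAm
  set Sm : Matrix (Fin (muN g N + 1)) (Fin (muN g N + 1)) (Polynomial (Lam g)) :=
    Matrix.of (fun k l : Fin (muN g N + 1) => s 0 (j l - (k:ℕ))) with hSm
  have hfac : (Matrix.of fun a l : Fin (muN g N + 1) => s (a : ℕ) (j l)) = Am * Sm := by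
    refine Matrix.ext fun a l => ?_
    rw [Matrix.mul_apply]
    show s (a:ℕ) (j l) = _
    have hsum : ∑ k : Fin (muN g N + 1), Am a k * Sm k l
        = ∑ k ∈ Finset.range (muN g N + 1),
            (((a:ℕ).choose k) • ((X : Polynomial (Lam g))^((a:ℕ)-k) * FUniv g^k))
              * s 0 (j l - k) :=
      Fin.sum_univ_eq_sum_range
        (fun k => (((a:ℕ).choose k) • ((X : Polynomial (Lam g))^((a:ℕ)-k) * FUniv g^k))
          * s 0 (j l - k)) (muN g N + 1)
    rw [hsum]
    rw [Stmt8Aux.s_closed g s t hst (a:ℕ) (j l) (hjl l a)]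
    have hshape : ∀ k : ℕ,
        (((a:ℕ).choose k) • ((X : Polynomial (Lam g))^((a:ℕ)-k) * FUniv g^k)) * s 0 (j l - k)
        = ((a:ℕ).choose k) • ((X : Polynomial (Lam g))^((a:ℕ)-k) * FUniv g^k * s 0 (j l - k)) := by
      intro k
      rw [smul_mul_assoc]
    rw [Finset.sum_congr rfl (fun k _ => hshape k)]
    refine Finset.sum_subset (Finset.range_subset_range.mpr (by have := Fin.is_le a; omega)) ?_
    intro k hk hk2
    rw [Finset.mem_range] at hk
    rw [Finset.mem_range, not_lt] at hk2
    rw [Nat.choose_eq_zero_of_lt (by omega), zero_smul]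
  have htri : Am.BlockTriangular OrderDual.toDual := by
    intro a k h
    have hlt : (a:ℕ) < (k:ℕ) := h
    show ((a:ℕ).choose (k:ℕ)) • ((X : Polynomial (Lam g))^((a:ℕ)-(k:ℕ)) * FUniv g^(k:ℕ)) = 0
    rw [Nat.choose_eq_zero_of_lt hlt, zero_smul]
  have hdet : Am.det = FUniv g ^ (muN g N * (muN g N + 1) / 2) := by
    rw [Matrix.det_of_lowerTriangular Am htri]
    have hdiag : ∀ a : Fin (muN g N + 1), Am a a = FUniv g ^ (a:ℕ) := by
      intro a
      show ((a:ℕ).choose (a:ℕ)) • ((X : Polynomial (Lam g))^((a:ℕ)-(a:ℕ)) * FUniv g^(a:ℕ)) = _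
      rw [Nat.choose_self, one_smul, Nat.sub_self, pow_zero, one_mul]
    rw [Finset.prod_congr rfl (fun a _ => hdiag a)]
    rw [Fin.prod_univ_eq_prod_range (fun a => FUniv g ^ a) (muN g N + 1)]
    rw [Finset.prod_pow_eq_pow_sum]
    congr 1
    rw [Finset.sum_range_id]
    rw [Nat.add_sub_cancel, Nat.mul_comm]
  rw [hfac, Matrix.det_mul, hdet]
  exact Dvd.intro _ rfl
end
end

section
/- For all integers i ≥ 0 and n > i + g, the polynomial s_{i,n}(x) ∈ Λ[x] has degree exactly 2gn + i in x, and its leading coefficient is the rational number 2^{n−1} · C_{2g+2i+1,n} / n! (which is therefore a nonzero integer). -/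
open Polynomial

noncomputable section

namespace Stmt12

/-- coefficient of product at sum of bounds -/
theorem coeff_mul_top {R : Type*} [CommRing R] {P Q : Polynomial R} {a b : ℕ}
    (hP : ∀ k, a < k → P.coeff k = 0) (hQ : ∀ k, b < k → Q.coeff k = 0) :
    (P*Q).coeff (a+b) = P.coeff a * Q.coeff b := by
  rw [Polynomial.coeff_mul]
  apply Finset.sum_eq_single (a, b)
  · rintro ⟨x, y⟩ hxy hne
    simp only [Finset.HasAntidiagonal.mem_antidiagonal] at hxy
    rcases lt_trichotomy x a with h | rfl | h
    · have : b < y := by omega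
      simp [hQ y this]
    · exact absurd (by omega : y = b) (by simpa using hne)
    · simp [hP x h]
  · intro h
    exact absurd (Finset.HasAntidiagonal.mem_antidiagonal.2 (rfl : a + b = a + b)) h

theorem coeff_mul_bnd {R : Type*} [CommRing R] {P Q : Polynomial R} {a b : ℕ}
    (hP : ∀ k, a < k → P.coeff k = 0) (hQ : ∀ k, b < k → Q.coeff k = 0) :
    ∀ k, a + b < k → (P*Q).coeff k = 0 := by
  intro k hk
  rw [Polynomial.coeff_mul]
  apply Finset.sum_eq_zero
  rintro ⟨x, y⟩ hxy
  simp only [Finset.HasAntidiagonal.mem_antidiagonal] at hxy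
  rcases le_or_gt x a with h | h
  · have : b < y := by omega
    simp [hQ y this]
  · simp [hP x h]

variable (g : ℕ)

theorem p_coeff_top : (pUniv g).coeff (2*g+1) = 1 := by
  simp only [pUniv, coeff_add, coeff_X_pow, if_pos rfl, Polynomial.finset_sum_coeff,
    coeff_C_mul, coeff_X_pow]
  rw [Finset.sum_eq_zero]
  · simp
  · intro i _
    have : ¬ (2*g+1 = (i:ℕ)) := by omega
    simp [this]

theorem p_bnd : ∀ k, 2*g+1 < k → (pUniv g).coeff k = 0 := by
  intro k hk
  simp only [pUniv, coeff_add, coeff_X_pow, Polynomial.finset_sum_coeff, coeff_C_mul]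
  rw [if_neg (by omega), Finset.sum_eq_zero]
  · ring
  · intro i _
    have : ¬ (k = (i:ℕ)) := by omega
    simp [this]

theorem q_bnd : ∀ k, g < k → (qUniv g).coeff k = 0 := by
  intro k hk
  simp only [qUniv, Polynomial.finset_sum_coeff, coeff_C_mul]
  rw [Finset.sum_eq_zero]
  intro i _
  have : ¬ (k = (i:ℕ)) := by omega
  simp [this]

theorem F_coeff_top : (FUniv g).coeff (2*g+1) = 4 := by
  have hq2 : (qUniv g ^ 2).coeff (2*g+1) = 0 := by
    rw [sq]
    exact coeff_mul_bnd (q_bnd g) (q_bnd g) _ (by omega)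
  simp [FUniv, hq2, coeff_ofNat_mul, p_coeff_top g]

theorem F_bnd : ∀ k, 2*g+1 < k → (FUniv g).coeff k = 0 := by
  intro k hk
  have hq2 : (qUniv g ^ 2).coeff k = 0 := by
    rw [sq]; exact coeff_mul_bnd (q_bnd g) (q_bnd g) _ (by omega)
  simp [FUniv, hq2, coeff_ofNat_mul, p_bnd g k hk]

theorem F'_coeff_top : ((FUniv g).derivative).coeff (2*g) = 4*(2*(g:ℤ)+1) := by
  rw [Polynomial.coeff_derivative]
  rw [show 2*g+1 = (2*g)+1 from rfl] at *
  rw [F_coeff_top g]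
  push_cast
  ring

theorem F'_bnd : ∀ k, 2*g < k → ((FUniv g).derivative).coeff k = 0 := by
  intro k hk
  rw [Polynomial.coeff_derivative, F_bnd g (k+1) (by omega)]
  ring

end Stmt12


namespace Stmt12
variable (g : ℕ)

theorem Cc_succ (m : ℤ) (n : ℕ) : Cc m (n+1) = Cc m n * (m - 2*(n:ℤ)) := by
  rw [Cc, Finset.prod_range_succ, ← Cc]

theorem Cc_ne_zero (a b : ℤ) (n : ℕ) : Cc (2*a+2*b+1) n ≠ 0 := by
  rw [Cc]
  apply Finset.prod_ne_zero_iff.2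
  intro r _
  omega

theorem intCast_poly (m : ℤ) : ((m : ℤ) : Polynomial (Lam g)) = C ((m : ℤ) : Lam g) := by
  simpa using (eq_intCast ((Polynomial.C (R := Lam g)).comp (Int.castRingHom (Lam g))) m).symm

/-- R₀ = xⁱ, R_{n+1} = 2F·Rₙ' − (2n−1)·F'·Rₙ. -/
def Rpol (i : ℕ) : ℕ → Polynomial (Lam g)
  | 0 => X ^ i
  | (n+1) => 2 * FUniv g * Polynomial.derivative (Rpol i n)
      - ((2*(n:ℤ) - 1 : ℤ) : Polynomial (Lam g)) * (FUniv g).derivative * Rpol i n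

theorem Rpol_bnd_coeff (hg : 1 ≤ g) (i : ℕ) : ∀ n : ℕ,
    (∀ k, 2*g*n + i < k → (Rpol g i n).coeff k = 0) ∧
    (Rpol g i n).coeff (2*g*n + i) = ((4^n * Cc (2*(g:ℤ)+2*(i:ℤ)+1) n : ℤ) : Lam g) := by
  intro n
  induction n with
  | zero =>
    constructor
    · intro k hk
      rw [Rpol]
      have : ¬ (k = i) := by omega
      simp [coeff_X_pow, this]
    · rw [Rpol]
      simp [coeff_X_pow, Cc]
  | succ n ih =>
    obtain ⟨hbnd, htop⟩ := ih
    set m : ℤ := 2*(g:ℤ)+2*(i:ℤ)+1 with hm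
    set d : ℕ := 2*g*n + i with hd
    have hidx : 2*g*(n+1) + i = d + 2*g := by rw [hd]; ring
    rw [hidx]
    have hR' : ∀ k, d < k + 1 → ((Rpol g i n).derivative).coeff k = 0 := by
      intro k hk
      rw [Polynomial.coeff_derivative, hbnd (k+1) hk]
      ring
    have key : ∀ k, (Rpol g i (n+1)).coeff k =
        2 * ((FUniv g) * (Rpol g i n).derivative).coeff k
          - ((2*(n:ℤ) - 1 : ℤ) : Lam g) * ((FUniv g).derivative * Rpol g i n).coeff k := by
      intro k
      rw [Rpol]
      rw [coeff_sub, intCast_poly]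
      rw [mul_assoc, mul_assoc, coeff_C_mul]
      rw [show ((2 : Polynomial (Lam g)) * (FUniv g * (Rpol g i n).derivative)).coeff k
            = 2 * ((FUniv g) * (Rpol g i n).derivative).coeff k by
        simp [coeff_ofNat_mul]]
    constructor
    · intro k hk
      rw [key k]
      have h1 : ((FUniv g) * (Rpol g i n).derivative).coeff k = 0 := by
        rcases Nat.eq_zero_or_pos d with hd0 | hd0
        · have hR0 : (Rpol g i n).derivative = 0 := by
            apply Polynomial.ext
            intro j
            rw [Polynomial.coeff_derivative, hbnd (j+1) (by omega)]
            simp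
          rw [hR0, mul_zero, coeff_zero]
        · exact coeff_mul_bnd (F_bnd g) (b := d - 1)
            (fun k hk => hR' k (by omega)) k (by omega)
      have h2 : ((FUniv g).derivative * Rpol g i n).coeff k = 0 :=
        coeff_mul_bnd (F'_bnd g) hbnd k (by omega)
      rw [h1, h2]
      ring
    · rw [key]
      have h2 : ((FUniv g).derivative * Rpol g i n).coeff (d + 2*g)
          = ((4*(2*(g:ℤ)+1) * (4^n * Cc m n) : ℤ) : Lam g) := by
        rw [show d + 2*g = 2*g + d by ring]
        rw [coeff_mul_top (F'_bnd g) hbnd, F'_coeff_top g, htop]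
        push_cast
        ring
      rcases Nat.eq_zero_or_pos d with hd0 | hd0
      · -- then n = 0 and i = 0
        have hgn : 2*g*n = 0 := by omega
        have hn0 : n = 0 := by
          rcases Nat.mul_eq_zero.mp hgn with h | h
          · omega
          · exact h
        have hi0 : i = 0 := by omega
        have hRconst : (Rpol g i n).derivative = 0 := by
          rw [hn0, Rpol, hi0]
          simp
        have h1 : ((FUniv g) * (Rpol g i n).derivative).coeff (d + 2*g) = 0 := by
          rw [hRconst, mul_zero, coeff_zero]
        rw [h1, h2, mul_zero, hn0]
        rw [show ((2*((0:ℕ):ℤ) - 1 : ℤ) : Lam g) * ((4*(2*(g:ℤ)+1) * (4^0 * Cc m 0) : ℤ) : Lam g)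
              = (((2*((0:ℕ):ℤ) - 1) * (4*(2*(g:ℤ)+1) * (4^0 * Cc m 0)) : ℤ) : Lam g) by push_cast; ring]
        rw [show (0:Lam g) - (((2*((0:ℕ):ℤ) - 1) * (4*(2*(g:ℤ)+1) * (4^0 * Cc m 0)) : ℤ) : Lam g)
              = (( -((2*((0:ℕ):ℤ) - 1) * (4*(2*(g:ℤ)+1) * (4^0 * Cc m 0))) : ℤ) : Lam g) by push_cast; ring]
        apply congrArg
        rw [Cc_succ]
        have : (i : ℤ) = 0 := by exact_mod_cast congrArg (Nat.cast : ℕ → ℤ) hi0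
        rw [hm]
        rw [this]
        simp [Cc]
      · obtain ⟨e, he⟩ : ∃ e, d = e + 1 := ⟨d - 1, by omega⟩
        have he' : (e : ℤ) + 1 = (d : ℤ) := by exact_mod_cast congrArg (Nat.cast : ℕ → ℤ) he.symm
        have h1 : ((FUniv g) * (Rpol g i n).derivative).coeff (d + 2*g)
            = (((4 * ((e:ℤ)+1) * (4^n * Cc m n)) : ℤ) : Lam g) := by
          rw [show d + 2*g = (2*g+1) + e by omega]
          rw [coeff_mul_top (F_bnd g) (b := e) (fun k hk => hR' k (by omega))]
          rw [F_coeff_top g, Polynomial.coeff_derivative, ← he, htop]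
          push_cast
          ring
        rw [h1, h2]
        rw [show (2 : Lam g) * (((4 * ((e:ℤ)+1) * (4^n * Cc m n)) : ℤ) : Lam g)
              - ((2*(n:ℤ) - 1 : ℤ) : Lam g) * ((4*(2*(g:ℤ)+1) * (4^n * Cc m n) : ℤ) : Lam g)
              = (((2 * (4 * ((e:ℤ)+1) * (4^n * Cc m n)) - (2*(n:ℤ)-1) * (4*(2*(g:ℤ)+1) * (4^n * Cc m n))) : ℤ) : Lam g) by
          push_cast; ring]
        apply congrArg
        rw [Cc_succ]
        have hdz : (d : ℤ) = 2*(g:ℤ)*(n:ℤ) + (i:ℤ) := by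
          rw [hd]; push_cast; ring
        rw [hm]
        linear_combination (8 * 4^n * Cc m n) * he' + (8 * 4^n * Cc m n) * hdz

end Stmt12


set_option maxHeartbeats 1000000
set_option synthInstance.maxHeartbeats 400000

namespace Stmt12
variable (g : ℕ)

abbrev Rg := Polynomial (Lam g)
abbrev Kg := FractionRing (Rg g)

instance instFieldKg : Field (Kg g) := inferInstance
instance instCharZeroKg : CharZero (Kg g) := inferInstance

abbrev ψ : Rg g →+* Kg g := algebraMap (Rg g) (Kg g)

theorem ψ_inj : Function.Injective (ψ g) := IsFractionRing.injective _ _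

def aK : Kg g := ψ g (FUniv g)

theorem F_degree : (FUniv g).degree = ((2*g+1 : ℕ) : WithBot ℕ) := by
  apply le_antisymm
  · rw [Polynomial.degree_le_iff_coeff_zero]
    intro m hm
    apply F_bnd
    exact_mod_cast hm
  · apply Polynomial.le_degree_of_ne_zero
    rw [F_coeff_top]
    intro h
    have : ((4:ℤ) : Lam g) = ((0:ℤ) : Lam g) := by exact_mod_cast h
    have h4 : (4:ℤ) = 0 := Int.cast_injective this
    norm_num at h4

theorem F_natDegree : (FUniv g).natDegree = 2*g+1 :=
  Polynomial.natDegree_eq_of_degree_eq_some (F_degree g)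

theorem F_ne_zero : FUniv g ≠ 0 := by
  intro h
  have h4 : (4 : Lam g) = 0 := by
    rw [← F_coeff_top g, h]
    simp
  norm_num at h4

theorem no_sq : ∀ b : Kg g, b ^ 2 ≠ aK g := by
  intro b hb
  have hint : IsIntegral (Rg g) b := by
    refine ⟨X^2 - Polynomial.C (FUniv g), ?_, ?_⟩
    · apply Polynomial.monic_X_pow_sub_C _ (by norm_num)
    · simp [Polynomial.eval₂_sub, hb, aK]
  obtain ⟨r, hr⟩ := IsIntegrallyClosed.isIntegral_iff.mp hint
  have hr2 : r ^ 2 = FUniv g := by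
    apply ψ_inj
    rw [map_pow, hr]
    exact hb
  have hrne : r ≠ 0 := by
    intro h
    rw [h] at hr2
    exact F_ne_zero g (by simpa using hr2.symm)
  have := F_natDegree g
  rw [← hr2, Polynomial.natDegree_pow] at this
  omega

def fpol : Polynomial (Kg g) := X ^ 2 - Polynomial.C (aK g)

instance fact_irr : Fact (Irreducible (fpol g)) :=
  ⟨X_pow_sub_C_irreducible_of_prime Nat.prime_two (no_sq g)⟩

abbrev Lg := AdjoinRoot (fpol g)

instance instFieldLg : Field (Lg g) := inferInstance

def AA : Kg g →+* Lg g := algebraMap (Kg g) (Lg g)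

def ww : Lg g := AdjoinRoot.root (fpol g)

theorem hw2 : ww g ^ 2 = AA g (aK g) := by
  have h : Polynomial.eval₂ (AdjoinRoot.of (fpol g)) (AdjoinRoot.root (fpol g))
      (X ^ 2 - Polynomial.C (aK g)) = 0 := AdjoinRoot.eval₂_root (fpol g)
  rw [Polynomial.eval₂_sub, Polynomial.eval₂_pow, Polynomial.eval₂_X, Polynomial.eval₂_C,
    sub_eq_zero] at h
  rw [ww, h, AA, AdjoinRoot.algebraMap_eq]

theorem AA_inj : Function.Injective (AA g) := (AA g).injective

/-- two-term products -/
theorem e_mul (c₀ c₁ d₀ d₁ : Kg g) :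
    (AA g c₀ + AA g c₁ * ww g) * (AA g d₀ + AA g d₁ * ww g)
      = AA g (c₀*d₀ + c₁*d₁*aK g) + AA g (c₀*d₁ + c₁*d₀) * ww g := by
  have h := hw2 g
  simp only [map_add, map_mul]
  ring_nf
  linear_combination (AA g c₁ * AA g d₁) * h

theorem e_zero (c₀ c₁ : Kg g) (h : AA g c₀ + AA g c₁ * ww g = 0) : c₀ = 0 ∧ c₁ = 0 := by
  by_cases h1 : c₁ = 0
  · refine ⟨?_, h1⟩
    rw [h1] at h
    simp at h
    exact AA_inj g (by simpa using h)
  · exfalso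
    have hww : AA g c₁ * ww g = - AA g c₀ := by
      linear_combination h
    have hKey : AA g (c₁^2 * aK g) = AA g (c₀^2) := by
      rw [map_mul, map_pow, ← hw2]
      rw [map_pow]
      linear_combination (AA g c₁ * ww g - AA g c₀) * hww
    have hK : c₁^2 * aK g = c₀^2 := AA_inj g hKey
    apply no_sq g (c₀ / c₁)
    rw [div_pow, eq_comm, eq_div_iff (pow_ne_zero 2 h1)]
    linear_combination hK

theorem e_inj {c₀ c₁ d₀ d₁ : Kg g}
    (h : AA g c₀ + AA g c₁ * ww g = AA g d₀ + AA g d₁ * ww g) : c₀ = d₀ ∧ c₁ = d₁ := by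
  have : AA g (c₀ - d₀) + AA g (c₁ - d₁) * ww g = 0 := by
    simp only [map_sub]
    linear_combination h
  obtain ⟨h0, h1⟩ := e_zero g _ _ this
  exact ⟨sub_eq_zero.mp h0, sub_eq_zero.mp h1⟩

theorem e_surj : ∀ z : Lg g, ∃ c : Kg g × Kg g, z = AA g c.1 + AA g c.2 * ww g := by
  intro z
  induction z using AdjoinRoot.induction_on with
  | ih p =>
    induction p using Polynomial.induction_on with
    | C a =>
      exact ⟨(a, 0), by simp [AA, ← AdjoinRoot.algebraMap_eq, ← Polynomial.aeval_def]⟩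
    | add p q hp hq =>
      obtain ⟨c, hc⟩ := hp
      obtain ⟨d, hd⟩ := hq
      refine ⟨(c.1 + d.1, c.2 + d.2), ?_⟩
      rw [map_add, hc, hd]
      simp only [map_add]
      ring
    | monomial m a hm =>
      obtain ⟨c, hc⟩ := hm
      refine ⟨(c.2 * aK g, c.1), ?_⟩
      have : (AdjoinRoot.mk (fpol g)) (Polynomial.C a * X ^ (m+1))
          = (AdjoinRoot.mk (fpol g)) (Polynomial.C a * X ^ m) * ww g := by
        rw [ww, ← AdjoinRoot.mk_X, ← map_mul]
        congr 1
        ring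
      rw [this, hc]
      rw [show (AA g c.1 + AA g c.2 * ww g) * ww g
            = AA g c.1 * ww g + AA g c.2 * ww g ^2 by ring, hw2]
      rw [← map_mul]
      ring

end Stmt12


namespace Stmt12
variable (g : ℕ)

theorem ψ_ne_zero {b : Rg g} (hb : b ≠ 0) : ψ g b ≠ 0 := by
  intro h
  exact hb (ψ_inj g (by simpa using h))

theorem exists_rep (z : Kg g) : ∃ a b : Rg g, b ≠ 0 ∧ z * ψ g b = ψ g a := by
  obtain ⟨⟨a, b⟩, h⟩ := IsLocalization.surj (nonZeroDivisors (Rg g)) z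
  exact ⟨a, b, nonZeroDivisors.ne_zero b.prop, h⟩

def dK (z : Kg g) : Kg g :=
  ψ g (Polynomial.derivative (exists_rep g z).choose * (exists_rep g z).choose_spec.choose
      - (exists_rep g z).choose * Polynomial.derivative (exists_rep g z).choose_spec.choose)
    / (ψ g (exists_rep g z).choose_spec.choose) ^ 2

theorem dK_spec (z : Kg g) {a b : Rg g} (hb : b ≠ 0) (hz : z * ψ g b = ψ g a) :
    dK g z * (ψ g b) ^ 2 = ψ g (Polynomial.derivative a * b - a * Polynomial.derivative b) := by
  have key : ∀ a₀ b₀ : Rg g, b₀ ≠ 0 → z * ψ g b₀ = ψ g a₀ →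
      ψ g (Polynomial.derivative a₀ * b₀ - a₀ * Polynomial.derivative b₀) / (ψ g b₀) ^ 2
        * (ψ g b) ^ 2 = ψ g (Polynomial.derivative a * b - a * Polynomial.derivative b) := by
    intro a₀ b₀ hb₀ne hz₀
    have hcross : a * b₀ = a₀ * b := by
      apply ψ_inj g
      rw [map_mul, map_mul, ← hz, ← hz₀]
      ring
    have hder : Polynomial.derivative a * b₀ + a * Polynomial.derivative b₀
        = Polynomial.derivative a₀ * b + a₀ * Polynomial.derivative b := by
      have := congrArg Polynomial.derivative hcross
      rwa [Polynomial.derivative_mul, Polynomial.derivative_mul] at this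
    have hRid : (Polynomial.derivative a₀ * b₀ - a₀ * Polynomial.derivative b₀) * b ^ 2
        = (Polynomial.derivative a * b - a * Polynomial.derivative b) * b₀ ^ 2 := by
      linear_combination (Polynomial.derivative b₀ * b + Polynomial.derivative b * b₀) * hcross
        - (b * b₀) * hder
    rw [div_mul_eq_mul_div, div_eq_iff (pow_ne_zero 2 (ψ_ne_zero g hb₀ne))]
    rw [← map_pow, ← map_pow, ← map_mul, ← map_mul]
    exact congrArg (ψ g) hRid
  rw [dK]
  exact key _ _ (exists_rep g z).choose_spec.choose_spec.1
    (exists_rep g z).choose_spec.choose_spec.2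

theorem dK_psi (h : Rg g) : dK g (ψ g h) = ψ g (Polynomial.derivative h) := by
  have := dK_spec g (ψ g h) (a := h) (b := 1) one_ne_zero (by rw [map_one, mul_one])
  simpa using this

theorem dK_add (z w : Kg g) : dK g (z + w) = dK g z + dK g w := by
  obtain ⟨a, b, hb, hz⟩ := exists_rep g z
  obtain ⟨c, d, hd, hw⟩ := exists_rep g w
  have hzw : (z + w) * ψ g (b * d) = ψ g (a * d + c * b) := by
    rw [map_mul, map_add, map_mul, map_mul]
    rw [add_mul]
    rw [show z * (ψ g b * ψ g d) = z * ψ g b * ψ g d by ring, hz]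
    rw [show w * (ψ g b * ψ g d) = w * ψ g d * ψ g b by ring, hw]
    try ring
  have E1 := dK_spec g z hb hz
  have E2 := dK_spec g w hd hw
  have E3 := dK_spec g (z+w) (mul_ne_zero hb hd) hzw
  have hbd : (ψ g (b*d))^2 ≠ 0 := pow_ne_zero 2 (ψ_ne_zero g (mul_ne_zero hb hd))
  apply mul_right_cancel₀ hbd
  rw [E3]
  have hexp : (dK g z + dK g w) * ψ g (b*d) ^ 2
      = dK g z * (ψ g b)^2 * (ψ g d)^2 + dK g w * (ψ g d)^2 * (ψ g b)^2 := by
    rw [map_mul]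
    ring
  rw [hexp, E1, E2, ← map_pow, ← map_pow, ← map_mul, ← map_mul, ← map_add]
  apply congrArg (ψ g)
  simp only [Polynomial.derivative_add, Polynomial.derivative_mul]
  try ring

theorem dK_mul (z w : Kg g) : dK g (z * w) = z * dK g w + dK g z * w := by
  obtain ⟨a, b, hb, hz⟩ := exists_rep g z
  obtain ⟨c, d, hd, hw⟩ := exists_rep g w
  have hzw : (z * w) * ψ g (b * d) = ψ g (a * c) := by
    rw [map_mul, map_mul]
    rw [show z * w * (ψ g b * ψ g d) = (z * ψ g b) * (w * ψ g d) by ring, hz, hw]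
  have E1 := dK_spec g z hb hz
  have E2 := dK_spec g w hd hw
  have E3 := dK_spec g (z*w) (mul_ne_zero hb hd) hzw
  have hbd : (ψ g (b*d))^2 ≠ 0 := pow_ne_zero 2 (ψ_ne_zero g (mul_ne_zero hb hd))
  apply mul_right_cancel₀ hbd
  rw [E3]
  have hexp : (z * dK g w + dK g z * w) * ψ g (b*d) ^ 2
      = (z * ψ g b) * ψ g b * (dK g w * (ψ g d)^2)
        + (w * ψ g d) * ψ g d * (dK g z * (ψ g b)^2) := by
    rw [map_mul]
    ring
  rw [hexp, E1, E2, hz, hw]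
  rw [← map_mul, ← map_mul, ← map_mul, ← map_mul, ← map_add]
  apply congrArg (ψ g)
  simp only [Polynomial.derivative_mul]
  try ring

theorem dK_one : dK g 1 = 0 := by
  have := dK_psi g 1
  simpa using this

theorem dK_inv (z : Kg g) (hz : z ≠ 0) : dK g z⁻¹ = - dK g z / z^2 := by
  have h1 : z * z⁻¹ = 1 := mul_inv_cancel₀ hz
  have := congrArg (dK g) h1
  rw [dK_mul, dK_one] at this
  rw [eq_div_iff (pow_ne_zero 2 hz)]
  linear_combination z * this - dK g z * h1

end Stmt12


namespace Stmt12
variable (g : ℕ)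

def ee (c₀ c₁ : Kg g) : Lg g := AA g c₀ + AA g c₁ * ww g

theorem ee_mul (c₀ c₁ d₀ d₁ : Kg g) :
    ee g c₀ c₁ * ee g d₀ d₁ = ee g (c₀*d₀ + c₁*d₁*aK g) (c₀*d₁ + c₁*d₀) :=
  e_mul g c₀ c₁ d₀ d₁

theorem ee_add (c₀ c₁ d₀ d₁ : Kg g) :
    ee g c₀ c₁ + ee g d₀ d₁ = ee g (c₀+d₀) (c₁+d₁) := by
  rw [ee, ee, ee, map_add, map_add]
  ring

theorem ee_inj {c₀ c₁ d₀ d₁ : Kg g} (h : ee g c₀ c₁ = ee g d₀ d₁) : c₀ = d₀ ∧ c₁ = d₁ :=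
  e_inj g h

theorem ee_surj (z : Lg g) : ∃ c : Kg g × Kg g, z = ee g c.1 c.2 := e_surj g z

theorem aK_ne_zero : aK g ≠ 0 := ψ_ne_zero g (F_ne_zero g)

def gK : Kg g := ψ g (Polynomial.derivative (FUniv g)) / (2 * aK g)

theorem hgK : gK g * (2 * aK g) = ψ g (Polynomial.derivative (FUniv g)) := by
  rw [gK, div_mul_cancel₀]
  exact mul_ne_zero two_ne_zero (aK_ne_zero g)

def δf (c : Kg g) : Kg g := dK g c + c * gK g

theorem δf_add (c d : Kg g) : δf g (c + d) = δf g c + δf g d := by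
  rw [δf, δf, δf, dK_add]
  ring

def coord (z : Lg g) : Kg g × Kg g := (ee_surj g z).choose

theorem coord_spec (z : Lg g) : z = ee g (coord g z).1 (coord g z).2 := (ee_surj g z).choose_spec

theorem coord_eq (c₀ c₁ : Kg g) : coord g (ee g c₀ c₁) = (c₀, c₁) := by
  obtain ⟨h0, h1⟩ := ee_inj g (coord_spec g (ee g c₀ c₁)).symm
  exact Prod.ext h0 h1

def DD (z : Lg g) : Lg g := ee g (dK g (coord g z).1) (δf g (coord g z).2)

theorem DD_e (c₀ c₁ : Kg g) : DD g (ee g c₀ c₁) = ee g (dK g c₀) (δf g c₁) := by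
  rw [DD, coord_eq]

theorem DD_add (a b : Lg g) : DD g (a + b) = DD g a + DD g b := by
  obtain ⟨c, hc⟩ := ee_surj g a
  obtain ⟨d, hd⟩ := ee_surj g b
  rw [hc, hd, ee_add, DD_e, DD_e, DD_e, dK_add, δf_add, ee_add]

theorem DD_mul (a b : Lg g) : DD g (a * b) = a * DD g b + DD g a * b := by
  obtain ⟨c, hc⟩ := ee_surj g a
  obtain ⟨d, hd⟩ := ee_surj g b
  rw [hc, hd, ee_mul, DD_e, DD_e, DD_e, ee_mul, ee_mul, ee_add]
  have hda : dK g (aK g) = gK g * (2 * aK g) := by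
    rw [show aK g = ψ g (FUniv g) from rfl, dK_psi]
    exact (hgK g).symm
  have h0 : dK g (c.1*d.1 + c.2*d.2*aK g)
      = c.1 * dK g d.1 + c.2 * δf g d.2 * aK g + (dK g c.1 * d.1 + δf g c.2 * d.2 * aK g) := by
    rw [dK_add, dK_mul, dK_mul, δf, δf]
    rw [dK_mul]
    linear_combination (c.2 * d.2) * hda
  have h1 : δf g (c.1*d.2 + c.2*d.1)
      = c.1 * δf g d.2 + c.2 * dK g d.1 + (dK g c.1 * d.2 + δf g c.2 * d.1) := by
    rw [δf, dK_add, dK_mul, dK_mul, δf, δf]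
    ring
  rw [h0, h1]

theorem dK_zero : dK g 0 = 0 := by
  have := dK_psi g 0
  simpa using this

def φg : Rg g →+* Lg g := (AA g).comp (ψ g)

theorem φg_inj : Function.Injective (φg g) := fun a b h => ψ_inj g (AA_inj g h)

theorem φg_ee (h : Rg g) : φg g h = ee g (ψ g h) 0 := by
  rw [ee, φg]
  simp

theorem DD_φg (h : Rg g) : DD g (φg g h) = φg g (Polynomial.derivative h) := by
  rw [φg_ee, DD_e, dK_psi, δf, dK_zero, φg_ee]
  rw [show (0:Kg g) + 0 * gK g = 0 by ring]

theorem DD_X : DD g (φg g X) = 1 := by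
  rw [DD_φg]
  simp [Polynomial.derivative_X, φg]

theorem DD_C (c : Lam g) : DD g (φg g (Polynomial.C c)) = 0 := by
  rw [DD_φg]
  simp [φg]

def yL : Lg g := (ww g - φg g (qUniv g)) * (2 : Lg g)⁻¹

def h2 : Kg g := (2 : Kg g)⁻¹

theorem AA_h2 : AA g (h2 g) = (2 : Lg g)⁻¹ := by
  rw [h2, map_inv₀, map_ofNat]

instance instCharZeroLg : CharZero (Lg g) :=
  charZero_of_injective_algebraMap (algebraMap (Kg g) (Lg g)).injective

theorem yL_ee : yL g = ee g (ψ g (-(qUniv g)) * h2 g) (h2 g) := by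
  rw [yL, ee, φg]
  simp only [RingHom.coe_comp, Function.comp_apply, map_mul, map_neg, AA_h2]
  ring

theorem two_yL : 2 * yL g + φg g (qUniv g) = ww g := by
  rw [yL]
  have h4 : (2 : Lg g) * (2 : Lg g)⁻¹ = 1 := mul_inv_cancel₀ (by norm_num)
  linear_combination (ww g - φg g (qUniv g)) * h4

theorem curve_eq : yL g ^ 2 + φg g (qUniv g) * yL g = φg g (pUniv g) := by
  have hF : φg g (FUniv g) = φg g (qUniv g) ^ 2 + 4 * φg g (pUniv g) := by
    rw [FUniv, map_add, map_pow, map_mul, map_ofNat]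
  have hwF : ww g ^ 2 = φg g (FUniv g) := by
    rw [hw2, φg]
    rfl
  have h4 : (2 : Lg g) * (2 : Lg g)⁻¹ = 1 := mul_inv_cancel₀ (by norm_num)
  rw [yL]
  linear_combination (((2:Lg g)⁻¹)^2) * hwF - (((2:Lg g)⁻¹)^2) * hF
    - (φg g (qUniv g) * ww g * (2:Lg g)⁻¹ - φg g (qUniv g)^2 * (2:Lg g)⁻¹
      - φg g (pUniv g) * (1 + 2*(2:Lg g)⁻¹)) * h4 + ((1:Lg g)/2) * hF

theorem indep (u v : Rg g) (h : φg g v * yL g = φg g u) : v = 0 := by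
  rw [yL_ee, φg_ee, φg_ee, ee_mul] at h
  have := ee_inj g h
  obtain ⟨-, h1⟩ := this
  rw [show ψ g v * h2 g + 0 * (ψ g (-(qUniv g)) * h2 g) = ψ g v * h2 g by ring] at h1
  have hh2 : h2 g ≠ 0 := by
    rw [h2]
    exact inv_ne_zero two_ne_zero
  have : ψ g v = 0 := by
    have := mul_eq_zero.mp h1
    tauto
  exact ψ_inj g (by simpa using this)

end Stmt12


namespace Stmt12
variable (g : ℕ)

theorem h2_ne_zero : h2 g ≠ 0 := by
  rw [h2]
  exact inv_ne_zero (by norm_num)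

theorem dK_two : dK g (2 : Kg g) = 0 := by
  have h : (2 : Kg g) = ψ g (2 : Rg g) := (map_ofNat (ψ g) 2).symm
  rw [h, dK_psi]
  simp

theorem dK_h2 : dK g (h2 g) = 0 := by
  rw [h2, dK_inv g _ (by norm_num : (2:Kg g) ≠ 0), dK_two]
  simp

theorem dK_mul_h2 (z : Kg g) : dK g (z * h2 g) = dK g z * h2 g := by
  rw [dK_mul, dK_h2]
  ring

theorem dKn_psi_h2 (n : ℕ) (h : Rg g) :
    (dK g)^[n] (ψ g h * h2 g) = ψ g (Polynomial.derivative^[n] h) * h2 g := by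
  induction n generalizing h with
  | zero => simp
  | succ n ih =>
    rw [Function.iterate_succ_apply, dK_mul_h2, dK_psi, ih, ← Function.iterate_succ_apply]

theorem δf_mul_h2 (z : Kg g) : δf g (z * h2 g) = δf g z * h2 g := by
  rw [δf, δf, dK_mul_h2]
  ring

theorem δfn_mul_h2 (n : ℕ) (z : Kg g) :
    (δf g)^[n] (z * h2 g) = (δf g)^[n] z * h2 g := by
  induction n generalizing z with
  | zero => simp
  | succ n ih =>
    rw [Function.iterate_succ_apply, δf_mul_h2]
    exact ih _

theorem dK_pow_mul (x : Kg g) (n : ℕ) : dK g (x ^ n) * x = (n : Kg g) * x ^ n * dK g x := by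
  induction n with
  | zero =>
    rw [pow_zero, dK_one]
    push_cast
    ring
  | succ n ih =>
    rw [pow_succ, dK_mul]
    push_cast
    linear_combination x * ih

def tK : Kg g := ψ g (2 * FUniv g)

theorem tK_eq : tK g = 2 * aK g := by
  rw [tK, map_mul, map_ofNat]
  rfl

theorem tK_ne_zero : tK g ≠ 0 := by
  rw [tK_eq]
  exact mul_ne_zero (by norm_num) (aK_ne_zero g)

theorem dK_tK : dK g (tK g) = 2 * ψ g (Polynomial.derivative (FUniv g)) := by
  rw [tK, dK_psi]
  rw [Polynomial.derivative_mul]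
  simp [Polynomial.derivative_ofNat, map_ofNat]

theorem delta_iter (i : ℕ) : ∀ n : ℕ,
    (δf g)^[n] (ψ g (X ^ i)) * tK g ^ n = ψ g (Rpol g i n) := by
  intro n
  induction n with
  | zero =>
    rw [Rpol]
    simp
  | succ n ih =>
    set u := (δf g)^[n] (ψ g (X ^ i)) with hu
    rw [Function.iterate_succ_apply', ← hu]
    have h1 : dK g u * tK g ^ n + u * dK g (tK g ^ n) = ψ g (Polynomial.derivative (Rpol g i n)) := by
      have := congrArg (dK g) ih
      rw [dK_mul, dK_psi] at this
      linear_combination this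
    have h3 : dK g (tK g ^ n) * tK g
        = (n : Kg g) * tK g ^ n * (2 * ψ g (Polynomial.derivative (FUniv g))) := by
      rw [dK_pow_mul, dK_tK]
    have h5 : gK g * tK g = ψ g (Polynomial.derivative (FUniv g)) := by
      rw [tK_eq]
      exact hgK g
    have hR : ψ g (Rpol g i (n+1))
        = tK g * ψ g (Polynomial.derivative (Rpol g i n))
          - (2*(n:Kg g) - 1) * ψ g (Polynomial.derivative (FUniv g)) * ψ g (Rpol g i n) := by
      rw [show Rpol g i (n+1) = 2 * FUniv g * Polynomial.derivative (Rpol g i n)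
          - ((2*(n:ℤ) - 1 : ℤ) : Rg g) * (FUniv g).derivative * Rpol g i n from rfl]
      simp only [map_sub, map_mul, map_intCast, map_ofNat]
      rw [tK_eq, show (ψ g) (FUniv g) = aK g from rfl]
      push_cast
      ring
    rw [hR, δf]
    rw [pow_succ]
    linear_combination tK g * h1 - u * h3 + (u * tK g ^ n) * h5
      + (ψ g (Polynomial.derivative (FUniv g)) - 2*(n:Kg g) * ψ g (Polynomial.derivative (FUniv g))) * ih

theorem DD_iter (n : ℕ) (c₀ c₁ : Kg g) :
    (DD g)^[n] (ee g c₀ c₁) = ee g ((dK g)^[n] c₀) ((δf g)^[n] c₁) := by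
  induction n generalizing c₀ c₁ with
  | zero => simp
  | succ n ih =>
    rw [Function.iterate_succ_apply, DD_e, ih, Function.iterate_succ_apply,
      Function.iterate_succ_apply]

theorem q_natDegree_le : (qUniv g).natDegree ≤ g := by
  apply Polynomial.natDegree_le_iff_coeff_eq_zero.2
  intro m hm
  exact q_bnd g m hm

end Stmt12


namespace Stmt12
variable (g : ℕ)

theorem main_poly (s t : ℕ → ℕ → Polynomial (Lam g)) (hst : IsUnivST g s t)
    (i n : ℕ) (hn : i + g < n) :
    Rpol g i n = ((2^(n+1) * n.factorial : ℕ) : Rg g) * s i n := by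
  have hn1 : 1 ≤ n := by omega
  have Hst := hst (Lg g) (φg g) (yL g) (DD g) (φg_inj g) (curve_eq g)
    (fun u v h => indep g u v h) (DD_add g) (DD_mul g) (DD_X g) (DD_C g) i n hn1
  rw [two_yL] at Hst
  -- the element x^i y in ee-coordinates
  have h2e : φg g X ^ i * yL g
      = ee g (ψ g (-(X^i * qUniv g)) * h2 g) (ψ g (X^i) * h2 g) := by
    rw [yL_ee, ← map_pow, φg_ee, ee_mul]
    congr 1
    · rw [show (-(X^i * qUniv g)) = X^i * (-(qUniv g)) by ring, map_mul]
      ring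
    · ring
  -- the n-th derivative
  have hzero : (dK g)^[n] (ψ g (-(X^i * qUniv g)) * h2 g) = 0 := by
    rw [dKn_psi_h2]
    have hdeg : (-(X^i * qUniv g) : Rg g).natDegree < n := by
      rw [Polynomial.natDegree_neg]
      have h1 : (X^i * qUniv g : Rg g).natDegree ≤ i + g := by
        apply le_trans (Polynomial.natDegree_mul_le)
        have := q_natDegree_le g
        have h2 : (X^i : Rg g).natDegree ≤ i := Polynomial.natDegree_X_pow_le i
        omega
      omega
    rw [Polynomial.iterate_derivative_eq_zero hdeg]
    simp
  have hDn : (DD g)^[n] (φg g X ^ i * yL g)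
      = ee g 0 ((δf g)^[n] (ψ g (X^i)) * h2 g) := by
    rw [h2e, DD_iter, hzero, δfn_mul_h2]
  rw [hDn] at Hst
  -- collapse powers of w
  have hww : ww g ^ (2*n-1) * ee g 0 ((δf g)^[n] (ψ g (X^i)) * h2 g)
      = AA g (aK g ^ n * ((δf g)^[n] (ψ g (X^i)) * h2 g)) := by
    rw [ee, map_zero, zero_add]
    rw [show ww g ^ (2*n-1) * (AA g ((δf g)^[n] (ψ g (X^i)) * h2 g) * ww g)
          = ww g ^ (2*n-1) * ww g * AA g ((δf g)^[n] (ψ g (X^i)) * h2 g) by ring]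
    rw [← pow_succ, show 2*n-1+1 = 2*n by omega, pow_mul, hw2, ← map_pow, ← map_mul]
  rw [hww] at Hst
  -- evaluate the K-side product
  have hval : aK g ^ n * ((δf g)^[n] (ψ g (X^i)) * h2 g)
      = ψ g (Rpol g i n) * (h2 g)^(n+1) := by
    have key := delta_iter g i n
    have h21 : (2:Kg g) * h2 g = 1 := mul_inv_cancel₀ (by norm_num)
    have h2n : (2:Kg g)^n * h2 g ^ n = 1 := by rw [← mul_pow, h21, one_pow]
    have htn : tK g ^ n = 2^n * aK g ^ n := by rw [tK_eq, mul_pow]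
    apply mul_left_cancel₀ (pow_ne_zero n (by norm_num : (2:Kg g) ≠ 0))
    rw [htn] at key
    calc (2:Kg g)^n * (aK g ^ n * ((δf g)^[n] (ψ g (X^i)) * h2 g))
        = ((δf g)^[n] (ψ g (X^i)) * (2^n * aK g ^ n)) * h2 g := by ring
      _ = ψ g (Rpol g i n) * h2 g := by rw [key]
      _ = ψ g (Rpol g i n) * ((2:Kg g)^n * h2 g ^ n) * h2 g := by rw [h2n]; ring
      _ = (2:Kg g)^n * (ψ g (Rpol g i n) * h2 g ^ (n+1)) := by rw [pow_succ]; ring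
  rw [hval] at Hst
  -- multiply by 2^(n+1)
  have htwoL : (2 : Lg g)^(n+1) * AA g (ψ g (Rpol g i n) * h2 g ^ (n+1))
      = φg g (Rpol g i n) := by
    rw [map_mul, map_pow, AA_h2, φg]
    have h4 : (2:Lg g) * (2:Lg g)⁻¹ = 1 := mul_inv_cancel₀ (by norm_num)
    have : (2:Lg g)^(n+1) * ((2:Lg g)⁻¹)^(n+1) = 1 := by
      rw [← mul_pow, h4, one_pow]
    calc (2 : Lg g)^(n+1) * (AA g (ψ g (Rpol g i n)) * ((2:Lg g)⁻¹) ^ (n+1))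
        = AA g (ψ g (Rpol g i n)) * ((2:Lg g)^(n+1) * ((2:Lg g)⁻¹)^(n+1)) := by ring
      _ = AA g (ψ g (Rpol g i n)) := by rw [this, mul_one]
      _ = _ := rfl
  have Hmain : φg g (Rpol g i n)
      = ((2^(n+1) * n.factorial : ℕ) : Lg g) * (φg g (s i n) + φg g (t i n) * yL g) := by
    rw [← htwoL, Hst]
    push_cast
    ring
  -- use independence to kill the t-part
  set cN : Rg g := ((2^(n+1) * n.factorial : ℕ) : Rg g) with hcN
  have hcNL : φg g cN = ((2^(n+1) * n.factorial : ℕ) : Lg g) := by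
    rw [hcN, map_natCast]
  have hsep : φg g (cN * t i n) * yL g = φg g (Rpol g i n - cN * s i n) := by
    rw [map_sub, map_mul, map_mul, hcNL, Hmain]
    ring
  have hv0 : cN * t i n = 0 := indep g _ _ hsep
  have hu0 : Rpol g i n - cN * s i n = 0 := by
    apply φg_inj g
    rw [← hsep, hv0]
    simp
  have := sub_eq_zero.mp hu0
  rw [this, hcN]

end Stmt12


/-- for n > i+g, s_{i,n}(x) has degree exactly 2gn+i in x, and its leading
coefficient is the nonzero integer 2^{n−1}·C_{2g+2i+1,n}/n!. -/
theorem stmt12 (g : ℕ) (hg : 1 ≤ g) (s t : ℕ → ℕ → Polynomial (Lam g))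
    (hst : IsUnivST g s t) (i n : ℕ) (hn : i + g < n) :
    (s i n).degree = ((2*g*n + i : ℕ) : WithBot ℕ) ∧
    ∃ c : ℤ, c ≠ 0 ∧ (s i n).leadingCoeff = (c : Lam g) ∧
      (n.factorial : ℤ) * c = 2^(n-1) * Cc (2*(g:ℤ)+2*(i:ℤ)+1) n := by

  classical
  obtain ⟨hbnd, htop⟩ := Stmt12.Rpol_bnd_coeff g hg i n
  have hmain := Stmt12.main_poly g s t hst i n hn
  set N : ℕ := 2^(n+1) * n.factorial with hN
  set M : ℤ := 4^n * Cc (2*(g:ℤ)+2*(i:ℤ)+1) n with hM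
  have hMne : M ≠ 0 := by
    rw [hM]
    exact mul_ne_zero (pow_ne_zero _ (by norm_num)) (Stmt12.Cc_ne_zero (g:ℤ) (i:ℤ) n)
  have hRdeg : (Stmt12.Rpol g i n).degree = ((2*g*n + i : ℕ) : WithBot ℕ) := by
    apply le_antisymm
    · rw [Polynomial.degree_le_iff_coeff_zero]
      intro m hm
      exact hbnd m (by exact_mod_cast hm)
    · apply Polynomial.le_degree_of_ne_zero
      rw [htop]
      exact_mod_cast Int.cast_ne_zero.mpr hMne
  have hNLam : ((N : ℕ) : Lam g) ≠ 0 := Nat.cast_ne_zero.mpr (by positivity)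
  have hsC : Stmt12.Rpol g i n = Polynomial.C ((N:ℕ) : Lam g) * s i n := by
    rw [hmain, Polynomial.C_eq_natCast]
  have hdegs : (s i n).degree = ((2*g*n + i : ℕ) : WithBot ℕ) := by
    rw [hsC, Polynomial.degree_mul, Polynomial.degree_C hNLam, zero_add] at hRdeg
    exact hRdeg
  refine ⟨hdegs, ?_⟩
  have hnatdeg : (Stmt12.Rpol g i n).natDegree = 2*g*n + i :=
    Polynomial.natDegree_eq_of_degree_eq_some hRdeg
  have hlcR : (Stmt12.Rpol g i n).leadingCoeff = ((M : ℤ) : Lam g) := by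
    rw [Polynomial.leadingCoeff, hnatdeg, htop]
  have hlc : ((N:ℕ) : Lam g) * (s i n).leadingCoeff = ((M : ℤ) : Lam g) := by
    rw [hsC, Polynomial.leadingCoeff_mul, Polynomial.leadingCoeff_C] at hlcR
    exact hlcR
  set z := (s i n).leadingCoeff with hzdef
  set c : ℤ := MvPolynomial.coeff 0 z with hc
  have hNC : ((N:ℕ) : Lam g) = MvPolynomial.C ((N:ℕ) : ℤ) :=
    (map_natCast (MvPolynomial.C : ℤ →+* Lam g) N).symm
  have hMC : ((M:ℤ) : Lam g) = MvPolynomial.C M :=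
    (map_intCast (MvPolynomial.C : ℤ →+* Lam g) M).symm
  have hz : z = MvPolynomial.C c := by
    apply MvPolynomial.ext
    intro μ
    have hμ := congrArg (MvPolynomial.coeff μ) hlc
    rw [hNC, hMC, MvPolynomial.coeff_C_mul, MvPolynomial.coeff_C] at hμ
    by_cases h0 : μ = 0
    · subst h0
      rw [MvPolynomial.coeff_C, if_pos rfl, ← hc]
    · rw [if_neg (Ne.symm h0)] at hμ
      have hzz : MvPolynomial.coeff μ z = 0 := by
        rcases mul_eq_zero.mp hμ with hh | hh
        · exfalso
          have hNpos : (0:ℤ) < ((N:ℕ):ℤ) := by positivity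
          exact hNpos.ne' hh
        · exact hh
      rw [hzz, MvPolynomial.coeff_C, if_neg (Ne.symm h0)]
  have hNc : ((N:ℕ) : ℤ) * c = M := by
    have hR := hlc
    rw [hz, hNC, hMC, ← map_mul] at hR
    exact MvPolynomial.C_injective _ _ hR
  have hcne : c ≠ 0 := by
    intro h0
    rw [h0, mul_zero] at hNc
    exact hMne hNc.symm
  refine ⟨c, hcne, ?_, ?_⟩
  · rw [hz]
    exact map_intCast (MvPolynomial.C : ℤ →+* Lam g) c
  · have h2pow : (4:ℤ)^n = 2^(n+1) * 2^(n-1) := by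
      rw [show (4:ℤ) = 2^2 by norm_num, ← pow_mul, ← pow_add]
      congr 1
      omega
    have hNZ : ((N:ℕ) : ℤ) = 2^(n+1) * (n.factorial : ℤ) := by
      rw [hN]
      push_cast
      ring
    apply mul_left_cancel₀ (a := (2:ℤ)^(n+1)) (pow_ne_zero _ (by norm_num))
    rw [show (2:ℤ)^(n+1) * ((n.factorial : ℤ) * c) = ((2^(n+1) * (n.factorial:ℤ))) * c by ring,
      ← hNZ, hNc, hM, h2pow]
    ring
end
end

section
/- For all integers i ≥ 0 and n ≥ 1, there exists a unique pair of polynomials s(x), t(x) ∈ Λ[x] such that (2y + 𝗊(x))^{2n−1} · D₁ⁿ(xⁱy) = n! · (s(x) + t(x)·y) holds in L, where D₁ⁿ denotes the n-fold iterate of the derivation D₁. -/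
open Polynomial

noncomputable section

theorem derivHasse {R : Type*} [CommRing R] (f : R[X]) (m : ℕ) :
    derivative (hasseDeriv m f) = ((m+1 : ℕ) : R[X]) * hasseDeriv (m+1) f := by
  rw [← hasseDeriv_one]
  have := hasseDeriv_comp (R := R) 1 m
  have h2 := congrFun (congrArg (fun (l : R[X] →ₗ[R] R[X]) => (l : R[X] → R[X])) this) f
  simp only [LinearMap.coe_comp, Function.comp_apply, LinearMap.smul_apply] at h2
  rw [h2, Nat.choose_one_right, nsmul_eq_mul, add_comm 1 m]

/-- `Wg g m` represents `(2y+q)^{2m-1} yₘ` for `m ≥ 1`, and `(2y+q)·y₀` for `m = 0`,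
where `yₘ` are the Taylor coefficients of the branch `Y(T)` with `Y(0) = y`. -/
def Wg (g : ℕ) : ℕ → Polynomial (Polynomial (Lam g))
  | 0 => 2 * C (pUniv g) - C (qUniv g) * X
  | (m+1) => C ((FUniv g)^m * (pUniv g).hasseDeriv (m+1))
      - ∑ j ∈ (Finset.range m).attach, Wg g (j+1) * Wg g (m - j)
      - ∑ j ∈ (Finset.range m).attach,
          C (((qUniv g).hasseDeriv (j+1)) * (FUniv g)^(j:ℕ)) * (2*X + C (qUniv g)) * Wg g (m - j)
      - C ((qUniv g).hasseDeriv (m+1) * (FUniv g)^m) * X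
  decreasing_by
  · have := j.2; simp only [Finset.mem_range] at this; omega
  · have := j.2; simp only [Finset.mem_range] at this; omega
  · have := j.2; simp only [Finset.mem_range] at this; omega

theorem FUniv_ne (g : ℕ) : FUniv g ≠ 0 := by
  intro h
  have := congrArg (Polynomial.map (MvPolynomial.eval₂Hom (RingHom.id ℤ) (fun _ => 0))) h
  simp only [FUniv, pUniv, qUniv, Polynomial.map_add, Polynomial.map_pow, Polynomial.map_mul,
    Polynomial.map_sum, map_C, map_X, MvPolynomial.eval₂Hom_X', map_zero, Polynomial.map_zero,
    C_0, zero_mul, Finset.sum_const_zero, add_zero, Polynomial.map_ofNat] at this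
  have h2 := congrArg (fun P => Polynomial.coeff P (2*g+1)) this
  simp [coeff_X_pow] at h2

/-- The Taylor coefficients `yₘ` in the field `L`. -/
def yyF (g : ℕ) {L : Type} [Field L] (φ : Polynomial (Lam g) →+* L) (y : L) : ℕ → L
  | 0 => y
  | (m+1) => Polynomial.eval₂ φ y (Wg g (m+1)) / (2*y + φ (qUniv g))^(2*m+1)



/-- for all i ≥ 0 and n ≥ 1, there is a unique pair (s,t) of polynomials in
Λ[x] with (2y+𝗊(x))^{2n−1}·D₁ⁿ(xⁱy) = n!(s(x)+t(x)y) in the fraction field L of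
Λ[x][y]/(y²+𝗊(x)y−𝗉(x)), where D₁ is the derivation with D₁x = 1 vanishing on Λ. -/
theorem stmt13 (g : ℕ) (hg : 1 ≤ g)
    (L : Type) [Field L] (φ : Polynomial (Lam g) →+* L) (y : L) (D : L → L)
    (hinj : Function.Injective φ)
    (hy : y ^ 2 + φ (qUniv g) * y = φ (pUniv g))
    (hind : ∀ u v : Polynomial (Lam g), φ v * y = φ u → v = 0)
    (hDadd : ∀ a b : L, D (a + b) = D a + D b)
    (hDmul : ∀ a b : L, D (a * b) = a * D b + D a * b)
    (hDx : D (φ X) = 1)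
    (hDc : ∀ c : Lam g, D (φ (C c)) = 0)
    (i n : ℕ) (hn : 1 ≤ n) :
    ∃! st : Polynomial (Lam g) × Polynomial (Lam g),
      (2 * y + φ (qUniv g)) ^ (2 * n - 1) * D^[n] (φ X ^ i * y)
        = (n.factorial : L) * (φ st.1 + φ st.2 * y) := by
  set z : L := 2 * y + φ (qUniv g) with hz
  set Y : ℕ → L := yyF g φ y with hY
  set ε : Polynomial (Polynomial (Lam g)) →+* L := Polynomial.eval₂RingHom φ y with hε
  -- basic facts about D
  have hDpoly : ∀ f : Polynomial (Lam g), D (φ f) = φ (derivative f) := by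
    intro f
    induction f using Polynomial.induction_on' with
    | add a b ha hb => rw [map_add, hDadd, ha, hb, derivative_add, map_add]
    | monomial k a =>
        induction k with
        | zero => simpa [Polynomial.monomial_zero_left] using hDc a
        | succ k ih =>
            have hme : (monomial (k+1)) a = (monomial k) a * X := by
              rw [Polynomial.monomial_mul_X]
            rw [hme, map_mul, hDmul, hDx, ih, derivative_mul, derivative_X, map_add, map_mul,
              map_mul, map_one]
            ring
  have hDnat : ∀ k : ℕ, D ((k : ℕ) : L) = 0 := by
    intro k
    rw [← map_natCast φ k, hDpoly]
    simp
  have hD0 : D 0 = 0 := by simpa using hDnat 0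
  have hDsub : ∀ a b : L, D (a - b) = D a - D b := by
    have hneg : ∀ a : L, D (-a) = - D a := by
      intro a
      have h := hDadd a (-a)
      rw [add_neg_cancel, hD0] at h
      linear_combination -h
    intro a b
    rw [sub_eq_add_neg, hDadd, hneg, sub_eq_add_neg]
  have hDsum : ∀ (m : ℕ) (f : ℕ → L),
      D (∑ j ∈ Finset.range m, f j) = ∑ j ∈ Finset.range m, D (f j) := by
    intro m f
    induction m with
    | zero => simpa using hD0
    | succ m ih => rw [Finset.sum_range_succ, hDadd, ih, Finset.sum_range_succ]
  -- basic algebraic facts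
  have hy2 : y^2 = φ (pUniv g) - φ (qUniv g) * y := by linear_combination hy
  have hz2 : z^2 = φ (FUniv g) := by
    have hF : φ (FUniv g) = φ (qUniv g)^2 + 4 * φ (pUniv g) := by
      rw [FUniv, map_add, map_mul, map_pow, map_ofNat]
    rw [hF, hz]
    linear_combination (4:L) * hy
  have hFne : φ (FUniv g) ≠ 0 := fun h => FUniv_ne g (hinj (h.trans (map_zero φ).symm))
  have hzne : z ≠ 0 := by
    intro h
    apply hFne
    rw [← hz2, h]
    ring
  have hφnat : ∀ k : ℕ, φ ((k : ℕ) : Polynomial (Lam g)) = (k : L) := fun k => map_natCast φ k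
  have hnne : ∀ k : ℕ, k ≠ 0 → ((k : ℕ) : L) ≠ 0 := by
    intro k hk h
    rw [← hφnat k, ← map_zero φ] at h
    exact hk (by exact_mod_cast hinj h)
  -- evaluation facts
  have εC : ∀ a : Polynomial (Lam g), ε (C a) = φ a := fun a => eval₂_C φ y
  have εX : ε X = y := eval₂_X φ y
  have hW0 : ε (Wg g 0) = z * y := by
    rw [Wg]
    show Polynomial.eval₂ φ y _ = z * y
    simp only [eval₂_sub, eval₂_mul, eval₂_C, eval₂_X, eval₂_ofNat]
    rw [hz]
    linear_combination (-2:L) * hy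
  have hE : ∀ m : ℕ, z ^ (2*m+1) * Y (m+1) = ε (Wg g (m+1)) := by
    intro m
    rw [hY]
    show z ^ (2*m+1) * (Polynomial.eval₂ φ y (Wg g (m+1)) / (2*y + φ (qUniv g))^(2*m+1)) = _
    rw [← hz, mul_comm, div_mul_cancel₀ _ (pow_ne_zero _ hzne)]
    rfl
  have hY0 : Y 0 = y := rfl
  have Rel : ∀ m : ℕ, z * Y (m+1)
      = φ ((pUniv g).hasseDeriv (m+1))
        - (∑ j ∈ Finset.range m, Y (j+1) * Y (m-j))
        - (∑ j ∈ Finset.range (m+1), φ ((qUniv g).hasseDeriv (j+1)) * Y (m-j)) := by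
    intro m
    apply mul_left_cancel₀ (pow_ne_zero (2*m) hzne)
    have hL : z^(2*m) * (z * Y (m+1)) = ε (Wg g (m+1)) := by
      rw [← mul_assoc, ← pow_succ, hE m]
    rw [hL, Wg]
    show Polynomial.eval₂ φ y _ = _
    simp only [eval₂_sub, eval₂_finset_sum, eval₂_mul, eval₂_add, eval₂_C, eval₂_X,
      eval₂_ofNat, Finset.sum_attach]
    have e1 : z^(2*m) * φ ((pUniv g).hasseDeriv (m+1))
        = φ (FUniv g ^ m * (pUniv g).hasseDeriv (m+1)) := by
      rw [map_mul, map_pow, ← hz2, ← pow_mul]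
    have e2 : ∀ j ∈ Finset.range m, z^(2*m) * (Y (j+1) * Y (m-j))
        = Polynomial.eval₂ φ y (Wg g (j+1)) * Polynomial.eval₂ φ y (Wg g (m-j)) := by
      intro j hj
      rw [Finset.mem_range] at hj
      obtain ⟨k, hk⟩ : ∃ k, m - j = k + 1 := ⟨m - j - 1, by omega⟩
      have h1 := hE j
      have h2 := hE k
      rw [hε, coe_eval₂RingHom] at h1 h2
      rw [hk, ← h1, ← h2, show 2*m = (2*j+1) + (2*k+1) by omega, pow_add]
      ring
    have e3 : ∀ j ∈ Finset.range m, z^(2*m) * (φ ((qUniv g).hasseDeriv (j+1)) * Y (m-j))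
        = φ ((qUniv g).hasseDeriv (j+1) * FUniv g ^ (j:ℕ)) * (2*y + φ (qUniv g))
            * Polynomial.eval₂ φ y (Wg g (m-j)) := by
      intro j hj
      rw [Finset.mem_range] at hj
      obtain ⟨k, hk⟩ : ∃ k, m - j = k + 1 := ⟨m - j - 1, by omega⟩
      have h2 := hE k
      rw [hε, coe_eval₂RingHom] at h2
      rw [map_mul, map_pow, ← hz, hk, ← h2,
        show 2*m = 2*j + ((2*k+1) + 1) by omega, pow_add, pow_add, pow_mul, hz2, pow_succ]
      ring
    have e4 : z^(2*m) * (φ ((qUniv g).hasseDeriv (m+1)) * Y (m - m))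
        = φ ((qUniv g).hasseDeriv (m+1) * FUniv g ^ m) * y := by
      rw [Nat.sub_self, hY0, map_mul, map_pow, pow_mul, hz2]
      ring
    have s1 : z^(2*m) * ∑ j ∈ Finset.range m, Y (j+1) * Y (m-j)
        = ∑ j ∈ Finset.range m,
            Polynomial.eval₂ φ y (Wg g (j+1)) * Polynomial.eval₂ φ y (Wg g (m-j)) := by
      rw [Finset.mul_sum]; exact Finset.sum_congr rfl e2
    have s2 : z^(2*m) * ∑ j ∈ Finset.range m, φ ((qUniv g).hasseDeriv (j+1)) * Y (m-j)
        = ∑ j ∈ Finset.range m, φ ((qUniv g).hasseDeriv (j+1) * FUniv g ^ (j:ℕ))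
            * (2*y + φ (qUniv g)) * Polynomial.eval₂ φ y (Wg g (m-j)) := by
      rw [Finset.mul_sum]; exact Finset.sum_congr rfl e3
    rw [Finset.sum_range_succ,
      Finset.sum_attach (Finset.range m)
        (fun j => Polynomial.eval₂ φ y (Wg g (j+1)) * Polynomial.eval₂ φ y (Wg g (m-j))),
      Finset.sum_attach (Finset.range m)
        (fun j => φ ((qUniv g).hasseDeriv (j+1) * FUniv g ^ j) * (2*y + φ (qUniv g))
          * Polynomial.eval₂ φ y (Wg g (m-j)))]
    linear_combination (-1 : L) * e1 + s1 + s2 + e4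
  have hDy : D y = Y 1 := by
    apply mul_left_cancel₀ hzne
    have hsq : D (y^2) = 2*y*D y := by rw [sq, hDmul]; ring
    have h1 := congrArg D hy
    rw [hDadd, hsq, hDmul, hDpoly, hDpoly] at h1
    have h0 := Rel 0
    norm_num [hY0, hasseDeriv_one'] at h0
    rw [h0, hz]
    linear_combination h1
  have hD2 : D (2:L) = 0 := by
    rw [show ((2:L)) = ((2:ℕ):L) by norm_num]; exact hDnat 2
  have hDz : D z = 2 * Y 1 + φ ((qUniv g).hasseDeriv 1) := by
    rw [hz, hDadd, hDpoly, hDmul, hD2, hDy, hasseDeriv_one']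
    ring
  have hDφh : ∀ (f : Polynomial (Lam g)) (m : ℕ),
      D (φ (hasseDeriv m f)) = ((m+1:ℕ):L) * φ (hasseDeriv (m+1) f) := by
    intro f m
    rw [hDpoly, derivHasse, map_mul, hφnat]
  have hDyy : ∀ m : ℕ, D (Y m) = ((m+1:ℕ):L) * Y (m+1) := by
    intro m
    induction m using Nat.strong_induction_on with
    | _ m ih =>
      cases m with
      | zero => simpa [hY0] using hDy
      | succ k =>
        apply mul_left_cancel₀ hzne
        have h1 := congrArg D (Rel k)
        rw [hDmul, hDsub, hDsub, hDsum, hDsum, hDφh, hDz] at h1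
        have s5 : ∑ j ∈ Finset.range k, D (Y (j+1) * Y (k-j))
            = ∑ j ∈ Finset.range k, (Y (j+1) * (((k-j+1:ℕ):L) * Y (k-j+1))
                + (((j+1+1:ℕ):L) * Y (j+1+1)) * Y (k-j)) := by
          apply Finset.sum_congr rfl
          intro j hj
          rw [Finset.mem_range] at hj
          rw [hDmul, ih (k-j) (by omega), ih (j+1) (by omega)]
        have s6 : ∑ j ∈ Finset.range (k+1), D (φ ((qUniv g).hasseDeriv (j+1)) * Y (k-j))
            = ∑ j ∈ Finset.range (k+1), (φ ((qUniv g).hasseDeriv (j+1))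
                  * (((k-j+1:ℕ):L) * Y (k-j+1))
                + (((j+1+1:ℕ):L) * φ ((qUniv g).hasseDeriv (j+1+1))) * Y (k-j)) := by
          apply Finset.sum_congr rfl
          intro j hj
          rw [Finset.mem_range] at hj
          rw [hDmul, ih (k-j) (by omega), hDφh]
        rw [s5, s6] at h1
        -- reindexing identities
        have ra : ∑ j ∈ Finset.range k, (Y (j+1) * (((k-j+1:ℕ):L) * Y (k-j+1))
                + (((j+1+1:ℕ):L) * Y (j+1+1)) * Y (k-j))
            = ((k+1+1:ℕ):L) * (∑ j ∈ Finset.range (k+1), Y (j+1) * Y (k+1-j))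
              - 2 * (Y 1 * Y (k+1)) := by
          rw [Finset.sum_add_distrib]
          have p1 : ∑ j ∈ Finset.range k, Y (j+1) * (((k-j+1:ℕ):L) * Y (k-j+1))
              = (∑ j ∈ Finset.range (k+1), ((k+1-j:ℕ):L) * (Y (j+1) * Y (k+1-j)))
                - Y 1 * Y (k+1) := by
            rw [Finset.sum_range_succ]
            have : ∀ j ∈ Finset.range k, ((k+1-j:ℕ):L) * (Y (j+1) * Y (k+1-j))
                = Y (j+1) * (((k-j+1:ℕ):L) * Y (k-j+1)) := by
              intro j hj
              rw [Finset.mem_range] at hj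
              have h3 : k + 1 - j = k - j + 1 := by omega
              rw [h3]; ring
            rw [Finset.sum_congr rfl this]
            simp
            ring
          have p2 : ∑ j ∈ Finset.range k, (((j+1+1:ℕ):L) * Y (j+1+1)) * Y (k-j)
              = (∑ j ∈ Finset.range (k+1), ((j+1:ℕ):L) * (Y (j+1) * Y (k+1-j)))
                - Y 1 * Y (k+1) := by
            have h5 := Finset.sum_range_succ' (fun j => ((j+1:ℕ):L) * (Y (j+1) * Y (k+1-j))) k
            rw [h5]
            have h6 : ∀ j ∈ Finset.range k, ((j+1+1:ℕ):L) * (Y (j+1+1) * Y (k+1-(j+1)))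
                = (((j+1+1:ℕ):L) * Y (j+1+1)) * Y (k-j) := by
              intro j hj
              have h7 : k+1-(j+1) = k - j := by omega
              rw [h7]; ring
            rw [Finset.sum_congr rfl h6]
            norm_num
          rw [p1, p2, Finset.mul_sum]
          rw [show ∀ S T : L, (S - Y 1 * Y (k+1)) + (T - Y 1 * Y (k+1))
            = S + T - 2*(Y 1 * Y (k+1)) from fun S T => by ring]
          congr 1
          rw [← Finset.sum_add_distrib]
          apply Finset.sum_congr rfl
          intro j hj
          rw [Finset.mem_range] at hj
          have h4 : (k+1-j) + (j+1) = k+1+1 := by omega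
          rw [show ((k+1+1:ℕ):L) * (Y (j+1) * Y (k+1-j))
              = (((k+1-j) + (j+1) :ℕ):L) * (Y (j+1) * Y (k+1-j)) by rw [h4]]
          push_cast
          ring
        have rb : ∑ j ∈ Finset.range (k+1), (φ ((qUniv g).hasseDeriv (j+1))
                  * (((k-j+1:ℕ):L) * Y (k-j+1))
                + (((j+1+1:ℕ):L) * φ ((qUniv g).hasseDeriv (j+1+1))) * Y (k-j))
            = ((k+1+1:ℕ):L) * (∑ j ∈ Finset.range (k+1+1),
                  φ ((qUniv g).hasseDeriv (j+1)) * Y (k+1-j))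
              - φ ((qUniv g).hasseDeriv 1) * Y (k+1) := by
          rw [Finset.sum_add_distrib]
          have p3 : ∑ j ∈ Finset.range (k+1),
                φ ((qUniv g).hasseDeriv (j+1)) * (((k-j+1:ℕ):L) * Y (k-j+1))
              = ∑ j ∈ Finset.range (k+1+1), ((k+1-j:ℕ):L)
                  * (φ ((qUniv g).hasseDeriv (j+1)) * Y (k+1-j)) := by
            conv_rhs => rw [Finset.sum_range_succ]
            have h7 : ∀ j ∈ Finset.range (k+1), ((k+1-j:ℕ):L)
                  * (φ ((qUniv g).hasseDeriv (j+1)) * Y (k+1-j))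
                = φ ((qUniv g).hasseDeriv (j+1)) * (((k-j+1:ℕ):L) * Y (k-j+1)) := by
              intro j hj
              rw [Finset.mem_range] at hj
              have h8 : k + 1 - j = k - j + 1 := by omega
              rw [h8]; ring
            rw [Finset.sum_congr rfl h7]
            simp
          have p4 : ∑ j ∈ Finset.range (k+1),
                (((j+1+1:ℕ):L) * φ ((qUniv g).hasseDeriv (j+1+1))) * Y (k-j)
              = (∑ j ∈ Finset.range (k+1+1), ((j+1:ℕ):L)
                    * (φ ((qUniv g).hasseDeriv (j+1)) * Y (k+1-j)))
                - φ ((qUniv g).hasseDeriv 1) * Y (k+1) := by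
            have h5 := Finset.sum_range_succ'
              (fun j => ((j+1:ℕ):L) * (φ ((qUniv g).hasseDeriv (j+1)) * Y (k+1-j))) (k+1)
            rw [h5]
            have h6 : ∀ j ∈ Finset.range (k+1), ((j+1+1:ℕ):L)
                  * (φ ((qUniv g).hasseDeriv (j+1+1)) * Y (k+1-(j+1)))
                = (((j+1+1:ℕ):L) * φ ((qUniv g).hasseDeriv (j+1+1))) * Y (k-j) := by
              intro j hj
              have h7 : k+1-(j+1) = k - j := by omega
              rw [h7]; ring
            rw [Finset.sum_congr rfl h6]
            norm_num
          rw [p3, p4, Finset.mul_sum]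
          rw [show ∀ S T u : L, S + (T - u) = S + T - u from fun _ _ _ => by ring]
          congr 1
          rw [← Finset.sum_add_distrib]
          apply Finset.sum_congr rfl
          intro j hj
          rw [Finset.mem_range] at hj
          rw [show ((k+1+1:ℕ):L) = (((k+1-j) + (j+1) :ℕ):L) by congr 1; omega]
          push_cast
          ring
        rw [ra, rb] at h1
        rw [mul_left_comm, Rel (k+1)]
        linear_combination h1
  -- the divided-power Taylor coefficients of xⁱy
  have hDV : ∀ m : ℕ, D (∑ j ∈ Finset.range (m+1), ((i.choose j:ℕ):L) * φ (X^(i-j)) * Y (m-j))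
      = ((m+1:ℕ):L) * ∑ j ∈ Finset.range (m+1+1),
          ((i.choose j:ℕ):L) * φ (X^(i-j)) * Y (m+1-j) := by
    intro m
    rw [hDsum]
    have t1 : ∀ j ∈ Finset.range (m+1), D (((i.choose j:ℕ):L) * φ (X^(i-j)) * Y (m-j))
        = ((i.choose j:ℕ):L) * (((i-j:ℕ):L) * φ (X^(i-j-1))) * Y (m-j)
          + ((i.choose j:ℕ):L) * φ (X^(i-j)) * (((m-j+1:ℕ):L) * Y (m-j+1)) := by
      intro j hj
      rw [hDmul, hDmul, hDnat, hDpoly, derivative_X_pow, hDyy (m-j),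
        map_mul, Polynomial.C_eq_natCast, map_natCast]
      ring
    rw [Finset.sum_congr rfl t1, Finset.sum_add_distrib]
    have u1 : ∑ j ∈ Finset.range (m+1),
          ((i.choose j:ℕ):L) * (((i-j:ℕ):L) * φ (X^(i-j-1))) * Y (m-j)
        = ∑ j ∈ Finset.range (m+1+1),
            ((j:ℕ):L) * (((i.choose j:ℕ):L) * φ (X^(i-j)) * Y (m+1-j)) := by
      have h5 := Finset.sum_range_succ'
        (fun j => ((j:ℕ):L) * (((i.choose j:ℕ):L) * φ (X^(i-j)) * Y (m+1-j))) (m+1)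
      rw [h5]
      have h6 : ∀ j ∈ Finset.range (m+1),
          ((j+1:ℕ):L) * (((i.choose (j+1):ℕ):L) * φ (X^(i-(j+1))) * Y (m+1-(j+1)))
          = ((i.choose j:ℕ):L) * (((i-j:ℕ):L) * φ (X^(i-j-1))) * Y (m-j) := by
        intro j hj
        have h7 : m+1-(j+1) = m - j := by omega
        have h8 : i - (j+1) = i - j - 1 := by omega
        have h9 : ((j+1:ℕ):L) * ((i.choose (j+1):ℕ):L) = ((i.choose j:ℕ):L) * ((i-j:ℕ):L) := by
          exact_mod_cast congrArg (Nat.cast : ℕ → L)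
            (by rw [mul_comm]; exact Nat.choose_succ_right_eq i j)
        rw [h7, h8]
        linear_combination (φ (X ^ (i - j - 1)) * Y (m - j)) * h9
      rw [Finset.sum_congr rfl h6]
      norm_num
    have u2 : ∑ j ∈ Finset.range (m+1),
          ((i.choose j:ℕ):L) * φ (X^(i-j)) * (((m-j+1:ℕ):L) * Y (m-j+1))
        = ∑ j ∈ Finset.range (m+1+1),
            ((m+1-j:ℕ):L) * (((i.choose j:ℕ):L) * φ (X^(i-j)) * Y (m+1-j)) := by
      conv_rhs => rw [Finset.sum_range_succ]
      have h7 : ∀ j ∈ Finset.range (m+1),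
          ((m+1-j:ℕ):L) * (((i.choose j:ℕ):L) * φ (X^(i-j)) * Y (m+1-j))
          = ((i.choose j:ℕ):L) * φ (X^(i-j)) * (((m-j+1:ℕ):L) * Y (m-j+1)) := by
        intro j hj
        rw [Finset.mem_range] at hj
        have h8 : m+1-j = m-j+1 := by omega
        rw [h8]; ring
      rw [Finset.sum_congr rfl h7]
      simp
    rw [u1, u2, Finset.mul_sum, ← Finset.sum_add_distrib]
    apply Finset.sum_congr rfl
    intro j hj
    rw [Finset.mem_range] at hj
    rw [show ((m+1:ℕ):L) = ((j + (m+1-j) :ℕ):L) by congr 1; omega]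
    push_cast
    ring
  have hDn : ∀ m : ℕ, D^[m] (φ X ^ i * y)
      = ((m.factorial:ℕ):L) * ∑ j ∈ Finset.range (m+1),
          ((i.choose j:ℕ):L) * φ (X^(i-j)) * Y (m-j) := by
    intro m
    induction m with
    | zero => simp [hY0, map_pow]
    | succ m ihm =>
        rw [Function.iterate_succ_apply', ihm, hDmul, hDnat, hDV m]
        push_cast [Nat.factorial_succ]
        ring
  -- the element of Λ[x][Y] representing z^{2n-1}·(the n-th divided derivative of xⁱy)
  set ω : Polynomial (Polynomial (Lam g)) :=
    (∑ j ∈ Finset.range n, C (((i.choose j:ℕ):Polynomial (Lam g)) * X^(i-j) * FUniv g^j)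
        * Wg g (n-j))
      + C (((i.choose n:ℕ):Polynomial (Lam g)) * X^(i-n) * FUniv g^(n-1)) * Wg g 0 with hω
  have hωeval : Polynomial.eval₂ φ y ω
      = z^(2*n-1) * ∑ j ∈ Finset.range (n+1), ((i.choose j:ℕ):L) * φ (X^(i-j)) * Y (n-j) := by
    rw [hω, eval₂_add, eval₂_finset_sum]
    conv_rhs => rw [Finset.sum_range_succ]
    rw [mul_add, Finset.mul_sum]
    congr 1
    · apply Finset.sum_congr rfl
      intro j hj
      rw [Finset.mem_range] at hj
      obtain ⟨k, hk⟩ : ∃ k, n - j = k + 1 := ⟨n - j - 1, by omega⟩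
      have h1 := hE k
      rw [hε, coe_eval₂RingHom] at h1
      have hzpow : z ^ (2*j + (2*k+1)) = φ (FUniv g)^j * z^(2*k+1) := by
        rw [pow_add, pow_mul, hz2]
      rw [hk, eval₂_mul, eval₂_C, show 2*n-1 = 2*j + (2*k+1) by omega, hzpow, ← h1]
      simp only [map_mul, map_pow, map_natCast]
      ring
    · have h1 := hW0
      rw [hε, coe_eval₂RingHom] at h1
      have hzpow : z ^ (2*(n-1) + 1) = φ (FUniv g)^(n-1) * z := by
        rw [pow_succ, pow_mul, hz2]
      rw [Nat.sub_self, hY0, eval₂_mul, eval₂_C,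
        show 2*n-1 = 2*(n-1) + 1 by omega, hzpow, mul_assoc, h1]
      simp only [map_mul, map_pow, map_natCast]
      ring
  -- reduce ω modulo the minimal polynomial of y
  set quad : Polynomial (Polynomial (Lam g)) := X^2 + (C (qUniv g) * X - C (pUniv g)) with hqd
  have hmonic : quad.Monic := by
    apply Polynomial.monic_X_pow_add
    apply lt_of_le_of_lt (degree_sub_le _ _)
    have d1 : (C (qUniv g) * X).degree ≤ 1 := by
      apply le_trans (degree_mul_le _ _)
      have := degree_C_le (a := qUniv g)
      have := degree_X_le (R := Polynomial (Lam g))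
      calc (C (qUniv g)).degree + X.degree ≤ 0 + 1 := by
            exact add_le_add degree_C_le degree_X_le
        _ = 1 := by norm_num
    have d2 : (C (pUniv g)).degree ≤ 1 := le_trans degree_C_le (by norm_num)
    calc max (C (qUniv g) * X).degree (C (pUniv g)).degree ≤ 1 := max_le d1 d2
      _ < 2 := by norm_num
  have hquadeval : Polynomial.eval₂ φ y quad = 0 := by
    rw [hqd, eval₂_add, eval₂_sub, eval₂_mul, eval₂_pow, eval₂_C, eval₂_C, eval₂_X]
    linear_combination hy
  have hqdeg : quad.degree = 2 := by
    have hlt : (C (qUniv g) * X - C (pUniv g)).degree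
        < (X^2 : Polynomial (Polynomial (Lam g))).degree := by
      rw [degree_X_pow]
      apply lt_of_le_of_lt (degree_sub_le _ _)
      have d1 : (C (qUniv g) * X).degree ≤ 1 := by
        apply le_trans (degree_mul_le _ _)
        calc (C (qUniv g)).degree + X.degree ≤ 0 + 1 := add_le_add degree_C_le degree_X_le
          _ = 1 := by norm_num
      have d2 : (C (pUniv g)).degree ≤ 1 := le_trans degree_C_le (by norm_num)
      calc max (C (qUniv g) * X).degree (C (pUniv g)).degree ≤ 1 := max_le d1 d2
        _ < 2 := by norm_num
    rw [hqd, degree_add_eq_left_of_degree_lt hlt, degree_X_pow]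
    norm_cast
  have hrdeg : (ω %ₘ quad).degree ≤ 1 := by
    have h1 := Polynomial.degree_modByMonic_lt ω hmonic
    rw [hqdeg] at h1
    rcases hd : (ω %ₘ quad).degree with _ | d
    · exact bot_le
    · rw [hd] at h1
      rw [show ((2:WithBot ℕ)) = ((2:ℕ):WithBot ℕ) by rfl] at h1
      rw [show ((1:WithBot ℕ)) = ((1:ℕ):WithBot ℕ) by rfl, WithBot.some_eq_coe] at *
      exact WithBot.coe_le_coe.mpr (Nat.lt_succ_iff.mp (WithBot.coe_lt_coe.mp h1))
  have hreval : Polynomial.eval₂ φ y ω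
      = φ ((ω %ₘ quad).coeff 0) + φ ((ω %ₘ quad).coeff 1) * y := by
    conv_lhs => rw [← Polynomial.modByMonic_add_div ω quad]
    rw [eval₂_add, eval₂_mul, hquadeval, zero_mul, add_zero]
    conv_lhs => rw [Polynomial.eq_X_add_C_of_degree_le_one hrdeg]
    rw [eval₂_add, eval₂_mul, eval₂_C, eval₂_C, eval₂_X]
    ring
  -- the existence witness
  refine ⟨⟨(ω %ₘ quad).coeff 0, (ω %ₘ quad).coeff 1⟩, ?_, ?_⟩
  · show z ^ (2*n-1) * D^[n] (φ X ^ i * y)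
      = (n.factorial : L) * (φ ((ω %ₘ quad).coeff 0) + φ ((ω %ₘ quad).coeff 1) * y)
    rw [hDn n, ← hreval, hωeval]
    push_cast
    ring
  · rintro ⟨s', t'⟩ h'
    have hex : z ^ (2*n-1) * D^[n] (φ X ^ i * y)
        = (n.factorial : L) * (φ ((ω %ₘ quad).coeff 0) + φ ((ω %ₘ quad).coeff 1) * y) := by
      rw [hDn n, ← hreval, hωeval]
      push_cast
      ring
    have heq : (n.factorial : L) * (φ s' + φ t' * y)
        = (n.factorial : L) * (φ ((ω %ₘ quad).coeff 0) + φ ((ω %ₘ quad).coeff 1) * y) := by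
      rw [← h', hex]
    have hfne : ((n.factorial:ℕ):L) ≠ 0 := hnne _ (Nat.factorial_ne_zero n)
    have h2 := mul_left_cancel₀ hfne heq
    have h3 : φ (t' - (ω %ₘ quad).coeff 1) * y = φ ((ω %ₘ quad).coeff 0 - s') := by
      rw [map_sub, map_sub]
      linear_combination h2
    have h4 : t' = (ω %ₘ quad).coeff 1 := by
      have := hind _ _ h3
      linear_combination this
    have h5 : s' = (ω %ₘ quad).coeff 0 := by
      apply hinj
      rw [h4] at h2
      exact add_right_cancel h2
    simp [Prod.ext_iff, h4, h5]
end
end
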